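/- arXiv:1511.08688 — 2 statements merged into one kernel-verified Lean document; each statement's English description precedes it below -/
import Mathlib

section
/- Let (R, 𝔪) be a commutative local ring and φ an invertible alternating 2n×2n matrix over R of Pfaffian 1. Then φ = εᵀ ψ_n ε for some ε ∈ E_{2n}(R). -/
open Matrix

/-- A matrix is alternating: skew-symmetric with zero diagonal. -/
def IsAlternatingM {ι R : Type*} [CommRing R] (A : Matrix ι ι R) : Prop :=
  Aᵀ = -A ∧ ∀ i, A i i = 0

/-- The elementary group `E_k(R)`. -/
def ElemGroup (k : ℕ) (R : Type*) [CommRing R] : Subgroup (Matrix (Fin k) (Fin k) R)ˣ :=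
  Subgroup.closure {u | ∃ (i j : Fin k) (a : R), i ≠ j ∧
    (u : Matrix (Fin k) (Fin k) R) = 1 + Matrix.single i j a}

/-- The group `E_k(I)` generated by elementary matrices with parameter in `I`. -/
def ElemIdealGroup (k : ℕ) (R : Type*) [CommRing R] (I : Ideal R) :
    Subgroup (Matrix (Fin k) (Fin k) R)ˣ :=
  Subgroup.closure {u | ∃ (i j : Fin k) (a : R), i ≠ j ∧ a ∈ I ∧
    (u : Matrix (Fin k) (Fin k) R) = 1 + Matrix.single i j a}

/-- The relative elementary group `E_k(R, I)`: normal closure of `E_k(I)` in `E_k(R)`. -/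
def ElemRelGroup (k : ℕ) (R : Type*) [CommRing R] (I : Ideal R) :
    Subgroup (Matrix (Fin k) (Fin k) R)ˣ :=
  Subgroup.closure {u | ∃ g ∈ ElemGroup k R, ∃ e ∈ ElemIdealGroup k R I, u = g * e * g⁻¹}

/-- `α_φ(v) = I + dᵀ v ν`, where `φ = [[0,-c],[cᵀ,ν]]`, `φ⁻¹ = [[0,d],[-dᵀ,μ]]`. -/
noncomputable def alphaM {m : ℕ} {R : Type*} [CommRing R]
    (φ : Matrix (Fin 1 ⊕ Fin m) (Fin 1 ⊕ Fin m) R) (v : Matrix (Fin 1) (Fin m) R) :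
    Matrix (Fin m) (Fin m) R :=
  1 + (φ⁻¹.toBlocks₁₂)ᵀ * v * φ.toBlocks₂₂

/-- `β_φ(v) = I + μ vᵀ c`. -/
noncomputable def betaM {m : ℕ} {R : Type*} [CommRing R]
    (φ : Matrix (Fin 1 ⊕ Fin m) (Fin 1 ⊕ Fin m) R) (v : Matrix (Fin 1) (Fin m) R) :
    Matrix (Fin m) (Fin m) R :=
  1 + φ⁻¹.toBlocks₂₂ * vᵀ * (-φ.toBlocks₁₂)

/-- The group `E_φ(R)` generated by the `α_φ(v)` and `β_φ(v)`. -/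
def EphiGroup {m : ℕ} {R : Type*} [CommRing R]
    (φ : Matrix (Fin 1 ⊕ Fin m) (Fin 1 ⊕ Fin m) R) : Subgroup (Matrix (Fin m) (Fin m) R)ˣ :=
  Subgroup.closure {u | ∃ v, (u : Matrix (Fin m) (Fin m) R) = alphaM φ v ∨
    (u : Matrix (Fin m) (Fin m) R) = betaM φ v}

/-- `E_φ(I)`. -/
def EphiIdealGroup {m : ℕ} {R : Type*} [CommRing R]
    (φ : Matrix (Fin 1 ⊕ Fin m) (Fin 1 ⊕ Fin m) R) (I : Ideal R) :
    Subgroup (Matrix (Fin m) (Fin m) R)ˣ :=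
  Subgroup.closure {u | ∃ v, (∀ j, v 0 j ∈ I) ∧ ((u : Matrix (Fin m) (Fin m) R) = alphaM φ v ∨
    (u : Matrix (Fin m) (Fin m) R) = betaM φ v)}

/-- `E_φ(R, I)`: normal closure of `E_φ(I)` in `E_φ(R)`. -/
def EphiRelGroup {m : ℕ} {R : Type*} [CommRing R]
    (φ : Matrix (Fin 1 ⊕ Fin m) (Fin 1 ⊕ Fin m) R) (I : Ideal R) :
    Subgroup (Matrix (Fin m) (Fin m) R)ˣ :=
  Subgroup.closure {u | ∃ g ∈ EphiGroup φ, ∃ e ∈ EphiIdealGroup φ I, u = g * e * g⁻¹}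

/-- `1 ⊥ ε = diag(1, ε)`. -/
def onePerp {m : ℕ} {R : Type*} [CommRing R] (ε : Matrix (Fin m) (Fin m) R) :
    Matrix (Fin 1 ⊕ Fin m) (Fin 1 ⊕ Fin m) R :=
  Matrix.fromBlocks 1 0 0 ε

/-- The standard symplectic matrix `ψ_n` of size `2n`. -/
def psiMat (n : ℕ) (R : Type*) [CommRing R] : Matrix (Fin (2*n)) (Fin (2*n)) R :=
  Matrix.of fun i j =>
    if i.val % 2 = 0 ∧ j.val = i.val + 1 then 1
    else if i.val % 2 = 1 ∧ i.val = j.val + 1 then -1 else 0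

def sumEquiv (n : ℕ) (h : 1 ≤ n) : (Fin 1 ⊕ Fin (2*n-1)) ≃ Fin (2*n) :=
  finSumFinEquiv.trans (finCongr (by omega))

/-- `ψ_n` viewed with the `1 ⊕ (2n-1)` block indexing. -/
def psiB (n : ℕ) (h : 1 ≤ n) (R : Type*) [CommRing R] :
    Matrix (Fin 1 ⊕ Fin (2*n-1)) (Fin 1 ⊕ Fin (2*n-1)) R :=
  (psiMat n R).submatrix (sumEquiv n h) (sumEquiv n h)

/-- `1 ⊥ ρ` reindexed to size `2n`. -/
def onePerpBig {n : ℕ} (h : 1 ≤ n) {R : Type*} [CommRing R]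
    (ρ : Matrix (Fin (2*n-1)) (Fin (2*n-1)) R) : Matrix (Fin (2*n)) (Fin (2*n)) R :=
  (onePerp ρ).submatrix (sumEquiv n h).symm (sumEquiv n h).symm

/-- The Pfaffian, defined by expansion along the first row. -/
def pfaffian {R : Type*} [CommRing R] : (n : ℕ) → Matrix (Fin (2*n)) (Fin (2*n)) R → R
  | 0, _ => 1
  | n+1, A => ∑ j : Fin (2*n+1),
      (-1:R)^(j:ℕ) * A ⟨0, by omega⟩ (Fin.cast (by omega) j.succ) *
      pfaffian n (A.submatrix (fun k => Fin.cast (by omega) (Fin.succ (j.succAbove k)))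
        (fun k => Fin.cast (by omega) (Fin.succ (j.succAbove k))))

/-- The permutation σ swapping `2i ↔ 2i+1` (0-indexed). -/
def sigmaP {n : ℕ} (i : Fin (2*n)) : Fin (2*n) :=
  ⟨if i.val % 2 = 0 then i.val + 1 else i.val - 1, by have := i.isLt; split <;> omega⟩

/-- Elementary symplectic generator `se_{ij}(z)`. -/
def seMat {n : ℕ} {R : Type*} [CommRing R] (i j : Fin (2*n)) (z : R) :
    Matrix (Fin (2*n)) (Fin (2*n)) R :=
  if i = sigmaP j then 1 + Matrix.single i j z
  else 1 + Matrix.single i j z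
       - Matrix.single (sigmaP j) (sigmaP i) ((-1:R)^((i:ℕ)+(j:ℕ)) * z)

/-- The elementary symplectic group `ESp_{2n}(R)`. -/
def ESpGroup (n : ℕ) (R : Type*) [CommRing R] : Subgroup (Matrix (Fin (2*n)) (Fin (2*n)) R)ˣ :=
  Subgroup.closure {u | ∃ (i j : Fin (2*n)) (z : R), i ≠ j ∧
    (u : Matrix (Fin (2*n)) (Fin (2*n)) R) = seMat i j z}

namespace PfAux
variable {R : Type*} [CommRing R]

def mm {n : ℕ} (j : Fin (2*n+1)) (k : Fin (2*n)) : Fin (2*(n+1)) :=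
  Fin.cast (by omega) (Fin.succ (j.succAbove k))

def z (n : ℕ) : Fin (2*(n+1)) := ⟨0, by omega⟩

def ci {n : ℕ} (j : Fin (2*n+1)) : Fin (2*(n+1)) := Fin.cast (by omega) j.succ

lemma mm_val {n : ℕ} (j : Fin (2*n+1)) (k : Fin (2*n)) :
    (mm j k : ℕ) = if (k:ℕ) < j then (k:ℕ)+1 else (k:ℕ)+2 := by
  simp only [mm, Fin.coe_cast, Fin.val_succ, Fin.succAbove, Fin.lt_def, Fin.coe_castSucc]
  split_ifs <;> simp

lemma ci_val {n : ℕ} (j : Fin (2*n+1)) : (ci j : ℕ) = (j:ℕ) + 1 := rfl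

lemma z_val (n : ℕ) : (z n : ℕ) = 0 := rfl

lemma pf_succ (n : ℕ) (A : Matrix (Fin (2*(n+1))) (Fin (2*(n+1))) R) :
    pfaffian (n+1) A = ∑ j : Fin (2*n+1),
      (-1:R)^(j:ℕ) * A (z n) (ci j) * pfaffian n (A.submatrix (mm j) (mm j)) := rfl

lemma mm_ne_z {n : ℕ} (j : Fin (2*n+1)) (k : Fin (2*n)) : mm j k ≠ z n := by
  intro h; have := congrArg Fin.val h; rw [mm_val, z_val] at this; split_ifs at this <;> omega

lemma mm_ne_ci {n : ℕ} (j : Fin (2*n+1)) (k : Fin (2*n)) : mm j k ≠ ci j := by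
  intro h; have := congrArg Fin.val h; rw [mm_val] at this; rw [ci_val] at this
  split_ifs at this <;> omega

lemma mm_inj {n : ℕ} (j : Fin (2*n+1)) : Function.Injective (mm j) := by
  intro a b h; have := congrArg Fin.val h; rw [mm_val, mm_val] at this
  apply Fin.ext; split_ifs at this <;> omega

def pre {n : ℕ} (j : Fin (2*n+1)) (q : Fin (2*(n+1))) (h0 : (q:ℕ) ≠ 0)
    (h1 : (q:ℕ) ≠ (j:ℕ)+1) : Fin (2*n) :=
  ⟨if (q:ℕ) < (j:ℕ)+1 then (q:ℕ) - 1 else (q:ℕ) - 2, by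
    have := q.isLt; have := j.isLt; split_ifs <;> omega⟩

lemma mm_pre {n : ℕ} (j : Fin (2*n+1)) (q : Fin (2*(n+1))) (h0 : (q:ℕ) ≠ 0)
    (h1 : (q:ℕ) ≠ (j:ℕ)+1) : mm j (pre j q h0 h1) = q := by
  apply Fin.ext; rw [mm_val]; simp only [pre]
  split_ifs <;> omega

/-- replace row and column `q` of `A` by `v` (skew-symmetrically). -/
def rcUpd {N : ℕ} (A : Matrix (Fin N) (Fin N) R) (q : Fin N) (v : Fin N → R) :
    Matrix (Fin N) (Fin N) R :=
  fun k l => if k = q then (if l = q then 0 else v l) else if l = q then -v k else A k l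

lemma rcUpd_apply_ne_ne {N : ℕ} (A : Matrix (Fin N) (Fin N) R) (q : Fin N) (v : Fin N → R)
    {k l : Fin N} (hk : k ≠ q) (hl : l ≠ q) : rcUpd A q v k l = A k l := by
  simp [rcUpd, hk, hl]

lemma rcUpd_submatrix_ci {n : ℕ} (A : Matrix (Fin (2*(n+1))) (Fin (2*(n+1))) R)
    (j : Fin (2*n+1)) (v : Fin (2*(n+1)) → R) :
    (rcUpd A (ci j) v).submatrix (mm j) (mm j) = A.submatrix (mm j) (mm j) := by
  ext k l; exact rcUpd_apply_ne_ne A _ v (mm_ne_ci j k) (mm_ne_ci j l)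

lemma rcUpd_submatrix {n : ℕ} (A : Matrix (Fin (2*(n+1))) (Fin (2*(n+1))) R)
    (j : Fin (2*n+1)) (q : Fin (2*(n+1))) (v : Fin (2*(n+1)) → R) (q' : Fin (2*n))
    (hq' : mm j q' = q) :
    (rcUpd A q v).submatrix (mm j) (mm j)
      = rcUpd (A.submatrix (mm j) (mm j)) q' (fun k => v (mm j k)) := by
  ext k l
  simp only [submatrix_apply, rcUpd]
  subst hq'
  rcases eq_or_ne k q' with rfl | hk
  · simp [(mm_inj j).eq_iff]
  · have : mm j k ≠ mm j q' := fun h => hk (mm_inj j h)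
    simp only [this, if_false, hk, if_false]
    rcases eq_or_ne l q' with rfl | hl
    · simp
    · have : mm j l ≠ mm j q' := fun h => hl (mm_inj j h)
      simp [this, hl]


lemma ci_ne_z {n : ℕ} (j : Fin (2*n+1)) : ci j ≠ z n := by
  intro h; have := congrArg Fin.val h; rw [ci_val, z_val] at this; omega

lemma pf_rcUpd_add : ∀ (n : ℕ) (A : Matrix (Fin (2*n)) (Fin (2*n)) R) (q : Fin (2*n))
    (v w : Fin (2*n) → R),
    pfaffian n (rcUpd A q (v + w)) = pfaffian n (rcUpd A q v) + pfaffian n (rcUpd A q w)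
  | 0, A, q, v, w => absurd q.2 (by omega)
  | (n+1), A, q, v, w => by
    rw [pf_succ, pf_succ, pf_succ, ← Finset.sum_add_distrib]
    apply Finset.sum_congr rfl
    intro j _
    rcases eq_or_ne q (z n) with rfl | hq
    · have hm : ∀ u : Fin (2*(n+1)) → R,
          (rcUpd A (z n) u).submatrix (mm j) (mm j) = A.submatrix (mm j) (mm j) := by
        intro u; ext k l; exact rcUpd_apply_ne_ne A _ u (mm_ne_z j k) (mm_ne_z j l)
      have hc : ∀ u : Fin (2*(n+1)) → R, rcUpd A (z n) u (z n) (ci j) = u (ci j) := by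
        intro u; simp [rcUpd, ci_ne_z j]
      rw [hm, hm, hm, hc, hc, hc, Pi.add_apply]; ring
    · rcases eq_or_ne q (ci j) with rfl | hq2
      · rw [rcUpd_submatrix_ci, rcUpd_submatrix_ci, rcUpd_submatrix_ci]
        have hc : ∀ u : Fin (2*(n+1)) → R, rcUpd A (ci j) u (z n) (ci j) = -u (z n) := by
          intro u; simp [rcUpd, Ne.symm hq]
        rw [hc, hc, hc, Pi.add_apply]; ring
      · have h0 : (q:ℕ) ≠ 0 := by
          intro h; exact hq (Fin.ext (by rw [h, z_val]))
        have h1 : (q:ℕ) ≠ (j:ℕ)+1 := by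
          intro h; exact hq2 (Fin.ext (by rw [h, ci_val]))
        have hpre := mm_pre j q h0 h1
        rw [rcUpd_submatrix A j q _ _ hpre, rcUpd_submatrix A j q _ _ hpre,
          rcUpd_submatrix A j q _ _ hpre]
        have hc : ∀ u : Fin (2*(n+1)) → R, rcUpd A q u (z n) (ci j) = A (z n) (ci j) :=
          fun u => rcUpd_apply_ne_ne _ _ _ (Ne.symm hq) (Ne.symm hq2)
        rw [hc, hc, hc]
        have harg : (fun k => (v + w) (mm j k))
            = (fun k => v (mm j k)) + (fun k => w (mm j k)) := rfl
        rw [harg, pf_rcUpd_add n]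
        ring

lemma pf_rcUpd_smul : ∀ (n : ℕ) (A : Matrix (Fin (2*n)) (Fin (2*n)) R) (q : Fin (2*n))
    (c : R) (v : Fin (2*n) → R),
    pfaffian n (rcUpd A q (c • v)) = c * pfaffian n (rcUpd A q v)
  | 0, A, q, c, v => absurd q.2 (by omega)
  | (n+1), A, q, c, v => by
    rw [pf_succ, pf_succ, Finset.mul_sum]
    apply Finset.sum_congr rfl
    intro j _
    rcases eq_or_ne q (z n) with rfl | hq
    · have hm : ∀ u : Fin (2*(n+1)) → R,
          (rcUpd A (z n) u).submatrix (mm j) (mm j) = A.submatrix (mm j) (mm j) := by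
        intro u; ext k l; exact rcUpd_apply_ne_ne A _ u (mm_ne_z j k) (mm_ne_z j l)
      have hc : ∀ u : Fin (2*(n+1)) → R, rcUpd A (z n) u (z n) (ci j) = u (ci j) := by
        intro u; simp [rcUpd, ci_ne_z j]
      rw [hm, hm, hc, hc, Pi.smul_apply, smul_eq_mul]; ring
    · rcases eq_or_ne q (ci j) with rfl | hq2
      · rw [rcUpd_submatrix_ci, rcUpd_submatrix_ci]
        have hc : ∀ u : Fin (2*(n+1)) → R, rcUpd A (ci j) u (z n) (ci j) = -u (z n) := by
          intro u; simp [rcUpd, Ne.symm hq]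
        rw [hc, hc, Pi.smul_apply, smul_eq_mul]; ring
      · have h0 : (q:ℕ) ≠ 0 := by
          intro h; exact hq (Fin.ext (by rw [h, z_val]))
        have h1 : (q:ℕ) ≠ (j:ℕ)+1 := by
          intro h; exact hq2 (Fin.ext (by rw [h, ci_val]))
        have hpre := mm_pre j q h0 h1
        rw [rcUpd_submatrix A j q _ _ hpre, rcUpd_submatrix A j q _ _ hpre]
        have hc : ∀ u : Fin (2*(n+1)) → R, rcUpd A q u (z n) (ci j) = A (z n) (ci j) :=
          fun u => rcUpd_apply_ne_ne _ _ _ (Ne.symm hq) (Ne.symm hq2)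
        rw [hc, hc]
        have harg : (fun k => (c • v) (mm j k)) = c • (fun k => v (mm j k)) := rfl
        rw [harg, pf_rcUpd_smul n]
        ring

lemma pf_rcUpd_zero (n : ℕ) (A : Matrix (Fin (2*n)) (Fin (2*n)) R) (q : Fin (2*n)) :
    pfaffian n (rcUpd A q 0) = 0 := by
  have : (0 : Fin (2*n) → R) = (0:R) • (0 : Fin (2*n) → R) := by simp
  rw [this, pf_rcUpd_smul, zero_mul]


lemma np (a b : ℕ) (h : a % 2 ≠ b % 2) : (-1:R)^a + (-1:R)^b = 0 := by
  rcases Nat.even_or_odd a with ha | ha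
  · have hb : Odd b := Nat.odd_iff.2 (by rw [Nat.even_iff] at ha; omega)
    rw [ha.neg_one_pow, hb.neg_one_pow]; ring
  · rcases Nat.even_or_odd b with hb | hb
    · rw [ha.neg_one_pow, hb.neg_one_pow]; ring
    · exfalso; rw [Nat.odd_iff] at ha hb; omega

def o (n : ℕ) : Fin (2*(n+1)) := ⟨1, by omega⟩

lemma o_val (n : ℕ) : (o n : ℕ) = 1 := rfl

def invo {m : ℕ} (p : Fin (2*(m+1)+1) × Fin (2*m+1)) : Fin (2*(m+1)+1) × Fin (2*m+1) :=
  if (p.1:ℕ) = 0 then p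
  else if (p.2:ℕ)+1 < (p.1:ℕ) then
    (⟨(p.2:ℕ)+1, by have := p.2.isLt; omega⟩, ⟨((p.1:ℕ)-2) % (2*m+1), Nat.mod_lt _ (by omega)⟩)
  else (⟨(p.2:ℕ)+2, by have := p.2.isLt; omega⟩, ⟨((p.1:ℕ)-1) % (2*m+1), Nat.mod_lt _ (by omega)⟩)

lemma invo_def0 {m : ℕ} (p : Fin (2*(m+1)+1) × Fin (2*m+1)) (hj : (p.1:ℕ) = 0) :
    invo p = p := by simp [invo, hj]

lemma invo_fst1 {m : ℕ} (p : Fin (2*(m+1)+1) × Fin (2*m+1)) (hj : (p.1:ℕ) ≠ 0)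
    (hb : (p.2:ℕ)+1 < (p.1:ℕ)) : ((invo p).1 : ℕ) = (p.2:ℕ)+1 := by
  simp [invo, hj, hb]

lemma invo_snd1 {m : ℕ} (p : Fin (2*(m+1)+1) × Fin (2*m+1)) (hj : (p.1:ℕ) ≠ 0)
    (hb : (p.2:ℕ)+1 < (p.1:ℕ)) : ((invo p).2 : ℕ) = (p.1:ℕ)-2 := by
  simp only [invo, hj, if_false, hb, if_true]
  exact Nat.mod_eq_of_lt (by have := p.1.isLt; omega)

lemma invo_fst2 {m : ℕ} (p : Fin (2*(m+1)+1) × Fin (2*m+1)) (hj : (p.1:ℕ) ≠ 0)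
    (hb : ¬ ((p.2:ℕ)+1 < (p.1:ℕ))) : ((invo p).1 : ℕ) = (p.2:ℕ)+2 := by
  simp [invo, hj, hb]

lemma invo_snd2 {m : ℕ} (p : Fin (2*(m+1)+1) × Fin (2*m+1)) (hj : (p.1:ℕ) ≠ 0)
    (hb : ¬ ((p.2:ℕ)+1 < (p.1:ℕ))) : ((invo p).2 : ℕ) = (p.1:ℕ)-1 := by
  simp only [invo, hj, if_false, hb, if_true]
  exact Nat.mod_eq_of_lt (by have := p.2.isLt; omega)

lemma master0 : ∀ (n : ℕ) (A : Matrix (Fin (2*(n+1))) (Fin (2*(n+1))) R)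
    (v : Fin (2*(n+1)) → R), v (z n) = 0 → v (o n) = 0 →
    pfaffian (n+1) (rcUpd (rcUpd A (z n) v) (o n) v) = 0
  | 0, A, v, h0, h1 => by
    rw [pf_succ]
    apply Finset.sum_eq_zero; intro j _
    have hj : j = (⟨0, by omega⟩ : Fin (2*0+1)) := Fin.ext (by have := j.isLt; omega)
    subst hj
    have hcij : ci (⟨0, by omega⟩ : Fin (2*0+1)) = o 0 := Fin.ext (by rw [ci_val, o_val])
    have hzo : (z 0) ≠ (o 0) := by
      intro h; have := congrArg Fin.val h; rw [z_val, o_val] at this; omega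
    rw [hcij]
    simp [rcUpd, hzo, h0]
  | (m+1), A, v, h0, h1 => by
    classical
    set F : (Fin (2*(m+1)+1) × Fin (2*m+1)) → R := fun p =>
      ((-1:R)^(p.1:ℕ) * v (ci p.1)) *
      ((-1:R)^(p.2:ℕ) * v (mm p.1 (ci p.2)) *
        pfaffian m (A.submatrix (mm p.1 ∘ mm p.2) (mm p.1 ∘ mm p.2))) with hF
    have key : pfaffian (m+1+1) (rcUpd (rcUpd A (z (m+1)) v) (o (m+1)) v)
        = ∑ p : Fin (2*(m+1)+1) × Fin (2*m+1), F p := by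
      rw [Fintype.sum_prod_type, pf_succ]
      apply Finset.sum_congr rfl
      intro j _
      rcases Nat.eq_zero_or_pos (j:ℕ) with hj | hj
      · have hcij : ci j = o (m+1) := Fin.ext (by rw [ci_val, o_val, hj])
        have hzo : z (m+1) ≠ o (m+1) := by
          intro h; have := congrArg Fin.val h; rw [z_val, o_val] at this; omega
        have hco : rcUpd (rcUpd A (z (m+1)) v) (o (m+1)) v (z (m+1)) (ci j) = 0 := by
          rw [hcij]; simp [rcUpd, hzo, h0]
        rw [hco, Finset.sum_eq_zero]
        · ring
        intro k _
        have hv : v (ci j) = 0 := by rw [hcij]; exact h1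
        simp [hF, hv]
      · have hone : ((o (m+1)) : ℕ) ≠ 0 := by rw [o_val]; omega
        have hone2 : ((o (m+1)) : ℕ) ≠ (j:ℕ)+1 := by rw [o_val]; omega
        have hpre := mm_pre j (o (m+1)) hone hone2
        have hpre_eq : pre j (o (m+1)) hone hone2 = z m := by
          apply Fin.ext
          show (if ((o (m+1)):ℕ) < (j:ℕ)+1 then ((o (m+1)):ℕ) - 1 else ((o (m+1)):ℕ) - 2) = ((z m):ℕ)
          rw [o_val, z_val]
          split_ifs <;> omega
        rw [hpre_eq] at hpre
        have hcoef : rcUpd (rcUpd A (z (m+1)) v) (o (m+1)) v (z (m+1)) (ci j) = v (ci j) := by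
          have h1' : ci j ≠ o (m+1) := fun h => by
            have := congrArg Fin.val h; rw [ci_val, o_val] at this; omega
          have h2' : z (m+1) ≠ o (m+1) := fun h => by
            have := congrArg Fin.val h; rw [z_val, o_val] at this; omega
          rw [rcUpd_apply_ne_ne _ _ v h2' h1']
          simp [rcUpd, ci_ne_z j]
        have hminor : (rcUpd (rcUpd A (z (m+1)) v) (o (m+1)) v).submatrix (mm j) (mm j)
            = rcUpd (A.submatrix (mm j) (mm j)) (z m) (fun k => v (mm j k)) := by
          rw [rcUpd_submatrix _ j _ v _ hpre]
          have hin : (rcUpd A (z (m+1)) v).submatrix (mm j) (mm j)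
              = A.submatrix (mm j) (mm j) := by
            ext k l; exact rcUpd_apply_ne_ne A _ v (mm_ne_z j k) (mm_ne_z j l)
          rw [hin]
        rw [hcoef, hminor, pf_succ, Finset.mul_sum]
        apply Finset.sum_congr rfl
        intro k _
        have hc2 : rcUpd (A.submatrix (mm j) (mm j)) (z m) (fun k => v (mm j k)) (z m) (ci k)
            = v (mm j (ci k)) := by simp [rcUpd, ci_ne_z k]
        have hm2 : (rcUpd (A.submatrix (mm j) (mm j)) (z m)
              (fun k => v (mm j k))).submatrix (mm k) (mm k)
            = A.submatrix (mm j ∘ mm k) (mm j ∘ mm k) := by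
          have : (rcUpd (A.submatrix (mm j) (mm j)) (z m)
              (fun k => v (mm j k))).submatrix (mm k) (mm k)
              = (A.submatrix (mm j) (mm j)).submatrix (mm k) (mm k) := by
            ext a b
            exact rcUpd_apply_ne_ne (A.submatrix (mm j) (mm j)) (z m)
              (fun k => v (mm j k)) (mm_ne_z k a) (mm_ne_z k b)
          rw [this, submatrix_submatrix]
        rw [hc2, hm2, hF]
    rw [key]
    apply Finset.sum_involution (fun p _ => invo p)
    · -- F p + F (invo p) = 0
      intro p _
      by_cases hj : (p.1:ℕ) = 0
      · rw [invo_def0 p hj]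
        have hv : v (ci p.1) = 0 := by
          have : ci p.1 = o (m+1) := Fin.ext (by rw [ci_val, o_val, hj])
          rw [this]; exact h1
        simp [hF, hv]
      · by_cases hb : (p.2:ℕ)+1 < (p.1:ℕ)
        · have e1 : ci (invo p).1 = mm p.1 (ci p.2) := by
            apply Fin.ext
            rw [ci_val, invo_fst1 p hj hb, mm_val, ci_val]
            split_ifs <;> omega
          have e2 : mm (invo p).1 (ci (invo p).2) = ci p.1 := by
            apply Fin.ext
            rw [mm_val, ci_val, ci_val, invo_fst1 p hj hb, invo_snd1 p hj hb]
            have := p.1.isLt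
            split_ifs <;> omega
          have e3 : A.submatrix (mm (invo p).1 ∘ mm (invo p).2) (mm (invo p).1 ∘ mm (invo p).2)
              = A.submatrix (mm p.1 ∘ mm p.2) (mm p.1 ∘ mm p.2) := by
            have hfun : (mm (invo p).1 ∘ mm (invo p).2) = (mm p.1 ∘ mm p.2) := by
              funext x
              apply Fin.ext
              simp only [Function.comp_apply]
              rw [mm_val, mm_val, mm_val, mm_val, invo_fst1 p hj hb, invo_snd1 p hj hb]
              have := p.1.isLt; have := p.2.isLt; have := x.isLt
              split_ifs <;> omega
            rw [hfun]
          have hs : (-1:R)^(p.1:ℕ) * (-1:R)^(p.2:ℕ)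
              + (-1:R)^(((invo p).1:ℕ)) * (-1:R)^(((invo p).2:ℕ)) = 0 := by
            rw [← pow_add, ← pow_add]
            apply np
            rw [invo_fst1 p hj hb, invo_snd1 p hj hb]
            omega
          rw [hF]
          simp only
          rw [e1, e2, e3]
          linear_combination (v (ci p.1) * v (mm p.1 (ci p.2))
            * pfaffian m (A.submatrix (mm p.1 ∘ mm p.2) (mm p.1 ∘ mm p.2))) * hs
        · have hble : (p.1:ℕ) ≤ (p.2:ℕ)+1 := by omega
          have e1 : ci (invo p).1 = mm p.1 (ci p.2) := by
            apply Fin.ext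
            rw [ci_val, invo_fst2 p hj hb, mm_val, ci_val]
            split_ifs <;> omega
          have e2 : mm (invo p).1 (ci (invo p).2) = ci p.1 := by
            apply Fin.ext
            rw [mm_val, ci_val, ci_val, invo_fst2 p hj hb, invo_snd2 p hj hb]
            split_ifs <;> omega
          have e3 : A.submatrix (mm (invo p).1 ∘ mm (invo p).2) (mm (invo p).1 ∘ mm (invo p).2)
              = A.submatrix (mm p.1 ∘ mm p.2) (mm p.1 ∘ mm p.2) := by
            have hfun : (mm (invo p).1 ∘ mm (invo p).2) = (mm p.1 ∘ mm p.2) := by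
              funext x
              apply Fin.ext
              simp only [Function.comp_apply]
              rw [mm_val, mm_val, mm_val, mm_val, invo_fst2 p hj hb, invo_snd2 p hj hb]
              have := p.1.isLt; have := p.2.isLt; have := x.isLt
              split_ifs <;> omega
            rw [hfun]
          have hs : (-1:R)^(p.1:ℕ) * (-1:R)^(p.2:ℕ)
              + (-1:R)^(((invo p).1:ℕ)) * (-1:R)^(((invo p).2:ℕ)) = 0 := by
            rw [← pow_add, ← pow_add]
            apply np
            rw [invo_fst2 p hj hb, invo_snd2 p hj hb]
            omega
          rw [hF]
          simp only
          rw [e1, e2, e3]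
          linear_combination (v (ci p.1) * v (mm p.1 (ci p.2))
            * pfaffian m (A.submatrix (mm p.1 ∘ mm p.2) (mm p.1 ∘ mm p.2))) * hs
    · -- F p ≠ 0 → invo p ≠ p
      intro p _ hFp
      by_cases hj : (p.1:ℕ) = 0
      · exfalso; apply hFp
        have hv : v (ci p.1) = 0 := by
          have : ci p.1 = o (m+1) := Fin.ext (by rw [ci_val, o_val, hj])
          rw [this]; exact h1
        simp [hF, hv]
      · intro h
        have hfst := congrArg (fun q => (q.1 : ℕ)) h
        by_cases hb : (p.2:ℕ)+1 < (p.1:ℕ)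
        · rw [invo_fst1 p hj hb] at hfst; omega
        · rw [invo_fst2 p hj hb] at hfst; omega
    · intro p _; exact Finset.mem_univ _
    · -- invo (invo p) = p
      intro p _
      by_cases hj : (p.1:ℕ) = 0
      · rw [invo_def0 p hj, invo_def0 p hj]
      · by_cases hb : (p.2:ℕ)+1 < (p.1:ℕ)
        · have f1 := invo_fst1 p hj hb
          have s1 := invo_snd1 p hj hb
          have hj' : ((invo p).1 : ℕ) ≠ 0 := by omega
          have hb' : ¬ (((invo p).2:ℕ)+1 < ((invo p).1:ℕ)) := by omega
          apply Prod.ext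
          · apply Fin.ext; rw [invo_fst2 _ hj' hb', s1]; omega
          · apply Fin.ext; rw [invo_snd2 _ hj' hb', f1]; omega
        · have f1 := invo_fst2 p hj hb
          have s1 := invo_snd2 p hj hb
          have hj' : ((invo p).1 : ℕ) ≠ 0 := by omega
          have hb' : (((invo p).2:ℕ)+1 < ((invo p).1:ℕ)) := by omega
          apply Prod.ext
          · apply Fin.ext; rw [invo_fst1 _ hj' hb', s1]; omega
          · apply Fin.ext; rw [invo_snd1 _ hj' hb', f1]; omega


lemma zo_ne (n : ℕ) : z n ≠ o n := by
  intro h; have := congrArg Fin.val h; rw [z_val, o_val] at this; omega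

lemma ci0_eq_o (n : ℕ) : ci (⟨0, by omega⟩ : Fin (2*n+1)) = o n :=
  Fin.ext (by rw [ci_val, o_val])

lemma ci0_eq_o' {n : ℕ} (j : Fin (2*n+1)) (hj : (j:ℕ) = 0) : ci j = o n :=
  Fin.ext (by rw [ci_val, o_val, hj])

lemma rcUpd_comm (n : ℕ) (A : Matrix (Fin (2*(n+1))) (Fin (2*(n+1))) R)
    (u v : Fin (2*(n+1)) → R)
    (hu0 : u (z n) = 0) (hu1 : u (o n) = 0) (hv0 : v (z n) = 0) (hv1 : v (o n) = 0) :
    rcUpd (rcUpd A (z n) u) (o n) v = rcUpd (rcUpd A (o n) v) (z n) u := by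
  have hzo := zo_ne n
  ext k l
  simp only [rcUpd]
  split_ifs <;> simp_all

lemma master_antisym (n : ℕ) (A : Matrix (Fin (2*(n+1))) (Fin (2*(n+1))) R)
    (u v : Fin (2*(n+1)) → R)
    (hu0 : u (z n) = 0) (hu1 : u (o n) = 0) (hv0 : v (z n) = 0) (hv1 : v (o n) = 0) :
    pfaffian (n+1) (rcUpd (rcUpd A (z n) u) (o n) v)
      + pfaffian (n+1) (rcUpd (rcUpd A (z n) v) (o n) u) = 0 := by
  have h := master0 n A (u+v) (by simp [Pi.add_apply, hu0, hv0]) (by simp [Pi.add_apply, hu1, hv1])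
  have e1 : pfaffian (n+1) (rcUpd (rcUpd A (z n) (u+v)) (o n) (u+v))
      = pfaffian (n+1) (rcUpd (rcUpd A (z n) (u+v)) (o n) u)
        + pfaffian (n+1) (rcUpd (rcUpd A (z n) (u+v)) (o n) v) :=
    pf_rcUpd_add (n+1) _ (o n) u v
  have hw0 : (u+v) (z n) = 0 := by simp [Pi.add_apply, hu0, hv0]
  have hw1 : (u+v) (o n) = 0 := by simp [Pi.add_apply, hu1, hv1]
  have e2 : rcUpd (rcUpd A (z n) (u+v)) (o n) u = rcUpd (rcUpd A (o n) u) (z n) (u+v) :=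
    rcUpd_comm n A (u+v) u hw0 hw1 hu0 hu1
  have e3 : rcUpd (rcUpd A (z n) (u+v)) (o n) v = rcUpd (rcUpd A (o n) v) (z n) (u+v) :=
    rcUpd_comm n A (u+v) v hw0 hw1 hv0 hv1
  have e4 : pfaffian (n+1) (rcUpd (rcUpd A (o n) u) (z n) (u+v))
      = pfaffian (n+1) (rcUpd (rcUpd A (o n) u) (z n) u)
        + pfaffian (n+1) (rcUpd (rcUpd A (o n) u) (z n) v) :=
    pf_rcUpd_add (n+1) _ (z n) u v
  have e5 : pfaffian (n+1) (rcUpd (rcUpd A (o n) v) (z n) (u+v))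
      = pfaffian (n+1) (rcUpd (rcUpd A (o n) v) (z n) u)
        + pfaffian (n+1) (rcUpd (rcUpd A (o n) v) (z n) v) :=
    pf_rcUpd_add (n+1) _ (z n) u v
  have c1 : rcUpd (rcUpd A (o n) u) (z n) u = rcUpd (rcUpd A (z n) u) (o n) u :=
    (rcUpd_comm n A u u hu0 hu1 hu0 hu1).symm
  have c2 : rcUpd (rcUpd A (o n) u) (z n) v = rcUpd (rcUpd A (z n) v) (o n) u :=
    (rcUpd_comm n A v u hv0 hv1 hu0 hu1).symm
  have c3 : rcUpd (rcUpd A (o n) v) (z n) u = rcUpd (rcUpd A (z n) u) (o n) v :=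
    (rcUpd_comm n A u v hu0 hu1 hv0 hv1).symm
  have c4 : rcUpd (rcUpd A (o n) v) (z n) v = rcUpd (rcUpd A (z n) v) (o n) v :=
    (rcUpd_comm n A v v hv0 hv1 hv0 hv1).symm
  have m1 := master0 n A u hu0 hu1
  have m2 := master0 n A v hv0 hv1
  rw [e1, e2, e3, e4, e5, c1, c2, c3, c4, m1, m2] at h
  linear_combination h

lemma pf_decomp (n : ℕ) (A : Matrix (Fin (2*(n+1))) (Fin (2*(n+1))) R)
    (hskew : ∀ k l, A l k = - A k l) (hdiag : ∀ k, A k k = 0) :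
    pfaffian (n+1) A
      = pfaffian (n+1) (rcUpd (rcUpd A (z n)
          (fun l => if l = z n ∨ l = o n then 0 else A (z n) l)) (o n)
          (fun l => if l = z n ∨ l = o n then 0 else A (o n) l))
        + A (z n) (o n) *
          pfaffian n (A.submatrix (mm (⟨0, by omega⟩ : Fin (2*n+1)))
            (mm (⟨0, by omega⟩ : Fin (2*n+1)))) := by
  have hzo := zo_ne n
  set u : Fin (2*(n+1)) → R := fun l => if l = z n ∨ l = o n then 0 else A (z n) l with hu
  set v : Fin (2*(n+1)) → R := fun l => if l = z n ∨ l = o n then 0 else A (o n) l with hv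
  set w : Fin (2*(n+1)) → R := fun l => if l = z n then 0 else A (z n) l with hw
  set d : Fin (2*(n+1)) → R := fun l => if l = o n then (1:R) else 0 with hd
  have hu0 : u (z n) = 0 := by simp [hu]
  have hu1 : u (o n) = 0 := by simp [hu]
  have hv0 : v (z n) = 0 := by simp [hv]
  have hv1 : v (o n) = 0 := by simp [hv]
  have hA : A = rcUpd (rcUpd A (o n) v) (z n) w := by
    ext k l
    simp only [rcUpd]
    rcases eq_or_ne k (z n) with rfl | hk
    · rw [if_pos rfl]
      rcases eq_or_ne l (z n) with rfl | hl
      · rw [if_pos rfl]; exact hdiag _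
      · rw [if_neg hl, hw]; simp [hl]
    · rw [if_neg hk]
      rcases eq_or_ne l (z n) with rfl | hl
      · rw [if_pos rfl, hw]; simp only [hk, if_neg]
        rw [hskew]; simp [hk]
      · rw [if_neg hl]
        rcases eq_or_ne k (o n) with rfl | hk2
        · rw [if_pos rfl]
          rcases eq_or_ne l (o n) with rfl | hl2
          · rw [if_pos rfl]; exact hdiag _
          · rw [if_neg hl2, hv]; simp [hl, hl2]
        · rw [if_neg hk2]
          rcases eq_or_ne l (o n) with rfl | hl2
          · rw [if_pos rfl, hv]; simp only [hk, hk2]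
            rw [hskew]; simp [hk, hk2]
          · rw [if_neg hl2]
  have hwd : w = u + (A (z n) (o n)) • d := by
    funext l
    simp only [hu, hd, hw, Pi.add_apply, Pi.smul_apply, smul_eq_mul]
    rcases eq_or_ne l (z n) with rfl | h0
    · simp [hzo, Ne.symm hzo]
    · rcases eq_or_ne l (o n) with rfl | h1
      · simp [Ne.symm hzo]
      · simp [h0, h1]
  have hG : pfaffian (n+1) (rcUpd (rcUpd A (o n) v) (z n) d)
      = pfaffian n (A.submatrix (mm (⟨0, by omega⟩ : Fin (2*n+1)))
          (mm (⟨0, by omega⟩ : Fin (2*n+1)))) := by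
    rw [pf_succ]
    rw [Finset.sum_eq_single (⟨0, by omega⟩ : Fin (2*n+1))]
    · have hco : rcUpd (rcUpd A (o n) v) (z n) d (z n) (ci (⟨0, by omega⟩ : Fin (2*n+1))) = 1 := by
        simp only [rcUpd, hd, if_true, eq_self_iff_true]
        rw [if_neg (ci_ne_z _), ci0_eq_o' _ rfl, if_pos rfl]
      rw [hco]
      have hmin : (rcUpd (rcUpd A (o n) v) (z n) d).submatrix
            (mm (⟨0, by omega⟩ : Fin (2*n+1))) (mm (⟨0, by omega⟩ : Fin (2*n+1)))
          = A.submatrix (mm (⟨0, by omega⟩ : Fin (2*n+1))) (mm (⟨0, by omega⟩ : Fin (2*n+1))) := by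
        ext a b
        simp only [submatrix_apply]
        rw [rcUpd_apply_ne_ne _ _ d (mm_ne_z _ _) (mm_ne_z _ _)]
        exact rcUpd_apply_ne_ne A _ v
          (by rw [← ci0_eq_o n]; exact mm_ne_ci _ _)
          (by rw [← ci0_eq_o n]; exact mm_ne_ci _ _)
      rw [hmin]
      simp
    · intro j _ hj
      have hjv : (j:ℕ) ≠ 0 := fun h => hj (Fin.ext h)
      have hco : rcUpd (rcUpd A (o n) v) (z n) d (z n) (ci j) = 0 := by
        have hcio : ci j ≠ o n := fun h => by
          have := congrArg Fin.val h; rw [ci_val, o_val] at this; omega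
        simp only [rcUpd, hd, if_true, eq_self_iff_true]
        rw [if_neg (ci_ne_z _), if_neg hcio]
      rw [hco]; ring
    · intro h; exact absurd (Finset.mem_univ _) h
  have key : pfaffian (n+1) A
      = pfaffian (n+1) (rcUpd (rcUpd A (o n) v) (z n) u)
        + A (z n) (o n) * pfaffian (n+1) (rcUpd (rcUpd A (o n) v) (z n) d) := by
    conv_lhs => rw [hA]
    rw [hwd]
    rw [pf_rcUpd_add (n+1) _ (z n) u ((A (z n) (o n)) • d)]
    rw [pf_rcUpd_smul (n+1) _ (z n) (A (z n) (o n)) d]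
  rw [key, hG]
  have : rcUpd (rcUpd A (o n) v) (z n) u = rcUpd (rcUpd A (z n) u) (o n) v :=
    (rcUpd_comm n A u v hu0 hu1 hv0 hv1).symm
  rw [this]

lemma pf_swap01 (n : ℕ) (A : Matrix (Fin (2*(n+1))) (Fin (2*(n+1))) R)
    (hskew : ∀ k l, A l k = - A k l) (hdiag : ∀ k, A k k = 0) :
    pfaffian (n+1) (A.submatrix (⇑(Equiv.swap (z n) (o n))) (⇑(Equiv.swap (z n) (o n))))
      = - pfaffian (n+1) A := by
  have hzo := zo_ne n
  set s : Fin (2*(n+1)) → Fin (2*(n+1)) := ⇑(Equiv.swap (z n) (o n)) with hs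
  set B : Matrix (Fin (2*(n+1))) (Fin (2*(n+1))) R := A.submatrix s s with hB
  have hBskew : ∀ k l, B l k = -B k l := fun k l => hskew _ _
  have hBdiag : ∀ k, B k k = 0 := fun k => hdiag _
  have hs_z : s (z n) = o n := Equiv.swap_apply_left _ _
  have hs_o : s (o n) = z n := Equiv.swap_apply_right _ _
  have hs_other : ∀ x : Fin (2*(n+1)), x ≠ z n → x ≠ o n → s x = x :=
    fun x h1 h2 => Equiv.swap_apply_of_ne_of_ne h1 h2
  have hd1 := pf_decomp n A hskew hdiag
  have hd2 := pf_decomp n B hBskew hBdiag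
  have hvB : (fun l => if l = z n ∨ l = o n then 0 else B (z n) l)
      = (fun l => if l = z n ∨ l = o n then 0 else A (o n) l) := by
    funext l
    split_ifs with h
    · rfl
    · push_neg at h
      simp [hB, submatrix_apply, hs_z, hs_other l h.1 h.2]
  have huB : (fun l => if l = z n ∨ l = o n then 0 else B (o n) l)
      = (fun l => if l = z n ∨ l = o n then 0 else A (z n) l) := by
    funext l
    split_ifs with h
    · rfl
    · push_neg at h
      simp [hB, submatrix_apply, hs_o, hs_other l h.1 h.2]
  rw [hvB, huB] at hd2
  set uu : Fin (2*(n+1)) → R := fun l => if l = z n ∨ l = o n then 0 else A (z n) l with huu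
  set vv : Fin (2*(n+1)) → R := fun l => if l = z n ∨ l = o n then 0 else A (o n) l with hvv
  have hQ : rcUpd (rcUpd B (z n) vv) (o n) uu = rcUpd (rcUpd A (z n) vv) (o n) uu := by
    ext k l
    simp only [rcUpd]
    split_ifs <;> try rfl
    rename_i h1 h2 h3 h4
    simp [hB, submatrix_apply, hs_other k h3 h1, hs_other l h4 h2]
  have hBzo : B (z n) (o n) = - A (z n) (o n) := by
    simp [hB, submatrix_apply, hs_z, hs_o]
    rw [hskew]
  have hminor : B.submatrix (mm (⟨0, by omega⟩ : Fin (2*n+1))) (mm (⟨0, by omega⟩ : Fin (2*n+1)))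
      = A.submatrix (mm (⟨0, by omega⟩ : Fin (2*n+1))) (mm (⟨0, by omega⟩ : Fin (2*n+1))) := by
    ext a b
    simp only [submatrix_apply, hB]
    rw [hs_other _ (mm_ne_z _ _) (by rw [← ci0_eq_o n]; exact mm_ne_ci _ _),
      hs_other _ (mm_ne_z _ _) (by rw [← ci0_eq_o n]; exact mm_ne_ci _ _)]
  rw [hQ, hBzo, hminor] at hd2
  have hu0 : uu (z n) = 0 := by simp [huu]
  have hu1 : uu (o n) = 0 := by simp [huu]
  have hv0 : vv (z n) = 0 := by simp [hvv]
  have hv1 : vv (o n) = 0 := by simp [hvv]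
  have hmas := master_antisym n A uu vv hu0 hu1 hv0 hv1
  rw [hB] at hd2
  linear_combination hd1 + hd2 + hmas


lemma swap_val {N : ℕ} (a b x : Fin N) :
    ((Equiv.swap a b) x : ℕ)
      = if (x:ℕ) = (a:ℕ) then (b:ℕ) else if (x:ℕ) = (b:ℕ) then (a:ℕ) else (x:ℕ) := by
  rw [Equiv.swap_apply_def]
  rcases eq_or_ne x a with rfl | h1
  · simp
  · rw [if_neg h1, if_neg (fun hh => h1 (Fin.ext hh))]
    rcases eq_or_ne x b with rfl | h2
    · simp
    · rw [if_neg h2, if_neg (fun hh => h2 (Fin.ext hh))]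

lemma pre_val {n : ℕ} (j : Fin (2*n+1)) (q : Fin (2*(n+1))) (h0 : (q:ℕ) ≠ 0)
    (h1 : (q:ℕ) ≠ (j:ℕ)+1) :
    ((pre j q h0 h1 : Fin (2*n)) : ℕ) = if (q:ℕ) < (j:ℕ)+1 then (q:ℕ)-1 else (q:ℕ)-2 := rfl

lemma submatrix_skew {N M : ℕ} (A : Matrix (Fin N) (Fin N) R)
    (hskew : ∀ k l, A l k = -A k l) (f : Fin M → Fin N) :
    ∀ k l, A.submatrix f f l k = -(A.submatrix f f) k l := fun k l => hskew (f k) (f l)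

lemma submatrix_diag {N M : ℕ} (A : Matrix (Fin N) (Fin N) R)
    (hdiag : ∀ k, A k k = 0) (f : Fin M → Fin N) :
    ∀ k, A.submatrix f f k k = 0 := fun k => hdiag (f k)

set_option maxHeartbeats 2000000 in
lemma pf_swap_adj : ∀ (n : ℕ) (A : Matrix (Fin (2*(n+1))) (Fin (2*(n+1))) R),
    (∀ k l, A l k = -A k l) → (∀ k, A k k = 0) →
    ∀ (a b : Fin (2*(n+1))), (b:ℕ) = (a:ℕ)+1 →
    pfaffian (n+1) (A.submatrix (⇑(Equiv.swap a b)) (⇑(Equiv.swap a b)))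
      = - pfaffian (n+1) A
  | n, A, hskew, hdiag, a, b, hb => by
    rcases Nat.eq_zero_or_pos (a:ℕ) with ha | ha
    · have haz : a = z n := Fin.ext (by rw [ha, z_val])
      have hbo : b = o n := Fin.ext (by rw [hb, ha, o_val])
      subst haz; subst hbo
      exact pf_swap01 n A hskew hdiag
    · -- a ≥ 1; then n ≥ 1 since b = a+1 ≤ 2n+1
      have hblt := b.isLt
      have halt := a.isLt
      have hn : 1 ≤ n := by omega
      obtain ⟨m, rfl⟩ : ∃ m, n = m + 1 := ⟨n - 1, by omega⟩
      have hanb : a ≠ b := fun h => by rw [h] at hb; omega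
      have hτz : Equiv.swap a b (z (m+1)) = z (m+1) :=
        Equiv.swap_apply_of_ne_of_ne
          (fun h => by have := congrArg Fin.val h; rw [z_val] at this; omega)
          (fun h => by have := congrArg Fin.val h; rw [z_val] at this; omega)
      set ja : Fin (2*(m+1)+1) := ⟨(a:ℕ)-1, by omega⟩ with hja
      set jb : Fin (2*(m+1)+1) := ⟨(a:ℕ), by omega⟩ with hjb
      have hjajb : ja ≠ jb := fun h => by
        have := congrArg Fin.val h; simp [hja, hjb] at this; omega
      -- note : Fin (2*(m+1)+1) = Fin (2*m+1+2) definally? 2*(m+1)+1 = 2*m+3, 2*m+1+2 = 2*m+3. ok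
      rw [pf_succ, pf_succ, ← Equiv.sum_comp (Equiv.swap ja jb)
        (fun j => (-1:R)^(j:ℕ) * A (z (m+1)) (ci j)
          * pfaffian (m+1) (A.submatrix (mm j) (mm j))), ← Finset.sum_neg_distrib]
      apply Finset.sum_congr rfl
      intro j _
      rcases eq_or_ne j ja with rfl | hj1
      · rw [Equiv.swap_apply_left]
        have hci : ci ja = a := Fin.ext (by rw [ci_val]; simp [hja]; omega)
        have hcib : ci jb = b := Fin.ext (by rw [ci_val]; simp [hjb]; omega)
        have hcoef : A.submatrix (⇑(Equiv.swap a b)) (⇑(Equiv.swap a b)) (z (m+1)) (ci ja)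
            = A (z (m+1)) (ci jb) := by
          rw [submatrix_apply, hτz, hci, hcib, Equiv.swap_apply_left]
        have hfun : ⇑(Equiv.swap a b) ∘ mm ja = mm jb := by
          funext x
          apply Fin.ext
          simp only [Function.comp_apply]
          rw [swap_val, mm_val, mm_val]
          simp only [hja, hjb]
          have := x.isLt
          split_ifs <;> omega
        have hmin : (A.submatrix (⇑(Equiv.swap a b)) (⇑(Equiv.swap a b))).submatrix (mm ja) (mm ja)
            = A.submatrix (mm jb) (mm jb) := by
          rw [submatrix_submatrix, hfun]
        rw [hcoef, hmin]
        have hsgn : (-1:R)^((ja:ℕ)) = -(-1:R)^((jb:ℕ)) := by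
          have := np (R := R) (ja:ℕ) (jb:ℕ) (by simp [hja, hjb]; omega)
          linear_combination this
        rw [hsgn]; ring
      · rcases eq_or_ne j jb with rfl | hj2
        · rw [Equiv.swap_apply_right]
          have hci : ci jb = b := Fin.ext (by rw [ci_val]; simp [hjb]; omega)
          have hcia : ci ja = a := Fin.ext (by rw [ci_val]; simp [hja]; omega)
          have hcoef : A.submatrix (⇑(Equiv.swap a b)) (⇑(Equiv.swap a b)) (z (m+1)) (ci jb)
              = A (z (m+1)) (ci ja) := by
            rw [submatrix_apply, hτz, hci, hcia, Equiv.swap_apply_right]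
          have hfun : ⇑(Equiv.swap a b) ∘ mm jb = mm ja := by
            funext x
            apply Fin.ext
            simp only [Function.comp_apply]
            rw [swap_val, mm_val, mm_val]
            simp only [hja, hjb]
            have := x.isLt
            split_ifs <;> omega
          have hmin : (A.submatrix (⇑(Equiv.swap a b)) (⇑(Equiv.swap a b))).submatrix (mm jb) (mm jb)
              = A.submatrix (mm ja) (mm ja) := by
            rw [submatrix_submatrix, hfun]
          rw [hcoef, hmin]
          have hsgn : (-1:R)^((jb:ℕ)) = -(-1:R)^((ja:ℕ)) := by
            have := np (R := R) (jb:ℕ) (ja:ℕ) (by simp [hja, hjb]; omega)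
            linear_combination this
          rw [hsgn]; ring
        · rw [Equiv.swap_apply_of_ne_of_ne hj1 hj2]
          have hjv1 : (j:ℕ) ≠ (a:ℕ)-1 := fun h => hj1 (Fin.ext (show (j:ℕ) = (ja:ℕ) from h))
          have hjv2 : (j:ℕ) ≠ (a:ℕ) := fun h => hj2 (Fin.ext (show (j:ℕ) = (jb:ℕ) from h))
          have hcia : ci j ≠ a := fun h => by
            have := congrArg Fin.val h; rw [ci_val] at this; omega
          have hcib : ci j ≠ b := fun h => by
            have := congrArg Fin.val h; rw [ci_val] at this; omega
          have hcoef : A.submatrix (⇑(Equiv.swap a b)) (⇑(Equiv.swap a b)) (z (m+1)) (ci j)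
              = A (z (m+1)) (ci j) := by
            rw [submatrix_apply, hτz, Equiv.swap_apply_of_ne_of_ne hcia hcib]
          have h0a : (a:ℕ) ≠ 0 := by omega
          have h1a : (a:ℕ) ≠ (j:ℕ)+1 := by omega
          have h0b : (b:ℕ) ≠ 0 := by omega
          have h1b : (b:ℕ) ≠ (j:ℕ)+1 := by omega
          set a' := pre j a h0a h1a with ha'
          set b' := pre j b h0b h1b with hb'
          have hb'a' : (b':ℕ) = (a':ℕ)+1 := by
            rw [ha', hb', pre_val, pre_val]
            split_ifs <;> omega
          have hfun : ⇑(Equiv.swap a b) ∘ mm j = mm j ∘ ⇑(Equiv.swap a' b') := by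
            funext x
            apply Fin.ext
            simp only [Function.comp_apply]
            rw [swap_val, mm_val, mm_val, swap_val]
            rw [ha', hb', pre_val, pre_val]
            have := x.isLt
            split_ifs <;> omega
          have hmin : (A.submatrix (⇑(Equiv.swap a b)) (⇑(Equiv.swap a b))).submatrix (mm j) (mm j)
              = (A.submatrix (mm j) (mm j)).submatrix (⇑(Equiv.swap a' b')) (⇑(Equiv.swap a' b')) := by
            rw [submatrix_submatrix, submatrix_submatrix, hfun]
          rw [hcoef, hmin]
          rw [pf_swap_adj m (A.submatrix (mm j) (mm j))
            (submatrix_skew A hskew (mm j)) (submatrix_diag A hdiag (mm j)) a' b' hb'a']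
          ring


set_option maxHeartbeats 1000000 in
lemma pf_swap_le : ∀ (d : ℕ) (n : ℕ) (A : Matrix (Fin (2*(n+1))) (Fin (2*(n+1))) R),
    (∀ k l, A l k = -A k l) → (∀ k, A k k = 0) →
    ∀ (a b : Fin (2*(n+1))), (a:ℕ) < (b:ℕ) → (b:ℕ) ≤ (a:ℕ) + d →
    pfaffian (n+1) (A.submatrix (⇑(Equiv.swap a b)) (⇑(Equiv.swap a b)))
      = - pfaffian (n+1) A
  | 0, n, A, hskew, hdiag, a, b, hab, hle => by omega
  | (d+1), n, A, hskew, hdiag, a, b, hab, hle => by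
    rcases eq_or_ne ((b:ℕ)) ((a:ℕ)+1) with h1 | h1
    · exact pf_swap_adj n A hskew hdiag a b h1
    · set c : Fin (2*(n+1)) := ⟨(b:ℕ)-1, by have := b.isLt; omega⟩ with hc
      have hcv : (c:ℕ) = (b:ℕ)-1 := rfl
      have hac : (a:ℕ) < (c:ℕ) := by omega
      have hcb : (b:ℕ) = (c:ℕ)+1 := by omega
      have hperm : ⇑(Equiv.swap a b)
          = ⇑(Equiv.swap c b) ∘ ⇑(Equiv.swap a c) ∘ ⇑(Equiv.swap c b) := by
        funext x
        apply Fin.ext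
        simp only [Function.comp_apply]
        rw [swap_val, swap_val, swap_val, swap_val]
        split_ifs <;> omega
      rw [hperm]
      have hsub : A.submatrix (⇑(Equiv.swap c b) ∘ ⇑(Equiv.swap a c) ∘ ⇑(Equiv.swap c b))
            (⇑(Equiv.swap c b) ∘ ⇑(Equiv.swap a c) ∘ ⇑(Equiv.swap c b))
          = (((A.submatrix (⇑(Equiv.swap c b)) (⇑(Equiv.swap c b))).submatrix
              (⇑(Equiv.swap a c)) (⇑(Equiv.swap a c))).submatrix
              (⇑(Equiv.swap c b)) (⇑(Equiv.swap c b))) := by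
        rw [submatrix_submatrix, submatrix_submatrix]
      rw [hsub]
      rw [pf_swap_adj n _ (submatrix_skew _ (submatrix_skew A hskew _) _)
        (submatrix_diag _ (submatrix_diag A hdiag _) _) c b hcb]
      rw [pf_swap_le d n _ (submatrix_skew A hskew _) (submatrix_diag A hdiag _)
        a c hac (by omega)]
      rw [pf_swap_adj n A hskew hdiag c b hcb]
      ring

lemma pf_swap_eps (n : ℕ) (A : Matrix (Fin (2*(n+1))) (Fin (2*(n+1))) R)
    (hskew : ∀ k l, A l k = -A k l) (hdiag : ∀ k, A k k = 0) (a b : Fin (2*(n+1))) :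
    pfaffian (n+1) (A.submatrix (⇑(Equiv.swap a b)) (⇑(Equiv.swap a b))) = pfaffian (n+1) A
    ∨ pfaffian (n+1) (A.submatrix (⇑(Equiv.swap a b)) (⇑(Equiv.swap a b)))
        = - pfaffian (n+1) A := by
  rcases lt_trichotomy ((a:ℕ)) ((b:ℕ)) with h | h | h
  · right; exact pf_swap_le ((b:ℕ) - (a:ℕ)) n A hskew hdiag a b h (by omega)
  · left
    have : a = b := Fin.ext h
    subst this
    rw [Equiv.swap_self]
    simp
  · right
    rw [Equiv.swap_comm]
    exact pf_swap_le ((a:ℕ) - (b:ℕ)) n A hskew hdiag b a h (by omega)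

lemma pf_eq_rows_zero (n : ℕ) (A : Matrix (Fin (2*(n+1))) (Fin (2*(n+1))) R)
    (hskew : ∀ k l, A l k = -A k l) (hdiag : ∀ k, A k k = 0)
    (p q : Fin (2*(n+1))) (hpq : p ≠ q) (hrows : ∀ l, A p l = A q l) :
    pfaffian (n+1) A = 0 := by
  classical
  set q'' : Fin (2*(n+1)) := Equiv.swap (z n) p q with hq''
  have hq''z : q'' ≠ z n := by
    rw [hq'']
    intro h
    have := (Equiv.swap (z n) p).injective (h.trans (Equiv.swap_apply_right (z n) p).symm)
    exact hpq this.symm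
  set A1 := A.submatrix (⇑(Equiv.swap (z n) p)) (⇑(Equiv.swap (z n) p)) with hA1
  set C := A1.submatrix (⇑(Equiv.swap (o n) q'')) (⇑(Equiv.swap (o n) q'')) with hC
  have hA1skew := submatrix_skew A hskew (⇑(Equiv.swap (z n) p))
  have hA1diag := submatrix_diag A hdiag (⇑(Equiv.swap (z n) p))
  have hCskew := submatrix_skew A1 hA1skew (⇑(Equiv.swap (o n) q''))
  have hCdiag := submatrix_diag A1 hA1diag (⇑(Equiv.swap (o n) q''))
  -- σ z = p, σ o = q
  have hσz : Equiv.swap (z n) p (Equiv.swap (o n) q'' (z n)) = p := by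
    rw [Equiv.swap_apply_of_ne_of_ne (zo_ne n) hq''z.symm, Equiv.swap_apply_left]
  have hσo : Equiv.swap (z n) p (Equiv.swap (o n) q'' (o n)) = q := by
    rw [Equiv.swap_apply_left, hq'', Equiv.swap_apply_self]
  have hCrows : ∀ l, C (z n) l = C (o n) l := by
    intro l
    simp only [hC, hA1, submatrix_apply, hσz, hσo]
    exact hrows _
  have hCzo : C (z n) (o n) = 0 := by
    simp only [hC, hA1, submatrix_apply, hσz, hσo]
    rw [hrows]; exact hdiag q
  have hCpf : pfaffian (n+1) C = 0 := by
    have hd := pf_decomp n C hCskew hCdiag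
    have huv : (fun l => if l = z n ∨ l = o n then 0 else C (o n) l)
        = (fun l => if l = z n ∨ l = o n then 0 else C (z n) l) := by
      funext l; rw [hCrows l]
    rw [huv, hCzo, zero_mul, add_zero] at hd
    rw [hd]
    exact master0 n C _ (by simp) (by simp)
  have e2 := pf_swap_eps n A1 hA1skew hA1diag (o n) q''
  have e1 := pf_swap_eps n A hskew hdiag (z n) p
  rw [← hC] at e2
  rw [← hA1] at e1
  rw [hCpf] at e2
  rcases e2 with e2 | e2 <;> rcases e1 with e1 | e1 <;>
    [skip; skip; skip; skip] <;> first
      | (rw [← e1, ← e2])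
      | (rw [← e1]; linear_combination e2)
      | (rw [e1] at e2; linear_combination e2)
      | (rw [e1] at e2; linear_combination - e2)

lemma rcUpd_skew {N : ℕ} (A : Matrix (Fin N) (Fin N) R)
    (hskew : ∀ k l, A l k = -A k l) (q : Fin N) (w : Fin N → R) :
    ∀ k l, rcUpd A q w l k = - rcUpd A q w k l := by
  intro k l
  simp only [rcUpd]
  by_cases hk : k = q
  · by_cases hl : l = q
    · simp [hk, hl]
    · simp [hk, hl]
  · by_cases hl : l = q
    · simp [hk, hl]
    · simp [hk, hl]; exact hskew k l

lemma rcUpd_diag {N : ℕ} (A : Matrix (Fin N) (Fin N) R)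
    (hdiag : ∀ k, A k k = 0) (q : Fin N) (w : Fin N → R) :
    ∀ k, rcUpd A q w k k = 0 := by
  intro k
  simp only [rcUpd]
  by_cases hk : k = q
  · simp [hk]
  · simp [hk]; exact hdiag k

lemma rcUpd_self {N : ℕ} (A : Matrix (Fin N) (Fin N) R)
    (hskew : ∀ k l, A l k = -A k l) (hdiag : ∀ k, A k k = 0) (q : Fin N) :
    rcUpd A q (fun l => A q l) = A := by
  ext k l
  simp only [rcUpd]
  by_cases hk : k = q
  · by_cases hl : l = q
    · simp [hk, hl, hdiag]
    · simp [hk, hl]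
  · by_cases hl : l = q
    · simp [hk, hl]; exact (hskew q k).symm
    · simp [hk, hl]

lemma pf_rcUpd_transvect (n : ℕ) (A : Matrix (Fin (2*(n+1))) (Fin (2*(n+1))) R)
    (hskew : ∀ k l, A l k = -A k l) (hdiag : ∀ k, A k k = 0)
    (p q : Fin (2*(n+1))) (hpq : p ≠ q) (t : R) :
    pfaffian (n+1) (rcUpd A q (fun l => A q l + t * A p l)) = pfaffian (n+1) A := by
  have hsplit : (fun l => A q l + t * A p l)
      = (fun l => A q l) + t • (fun l => A p l) := by
    funext l; simp [smul_eq_mul]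
  rw [hsplit, pf_rcUpd_add (n+1) A q _ _, pf_rcUpd_smul (n+1) A q t _,
    rcUpd_self A hskew hdiag q]
  have hzero : pfaffian (n+1) (rcUpd A q (fun l => A p l)) = 0 := by
    apply pf_eq_rows_zero n _ (rcUpd_skew A hskew q _) (rcUpd_diag A hdiag q _) p q hpq
    intro l
    simp only [rcUpd]
    rcases eq_or_ne l q with rfl | hl
    · simp [hpq, hdiag p]
    · simp [hpq, hl]
  rw [hzero]; ring


lemma mul_std_apply {N : ℕ} (M : Matrix (Fin N) (Fin N) R) (p q : Fin N) (t : R)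
    (k l : Fin N) :
    (M * Matrix.single p q t) k l = if l = q then M k p * t else 0 := by
  rw [Matrix.mul_apply]
  rcases eq_or_ne l q with rfl | hl
  · rw [if_pos rfl, Finset.sum_eq_single p]
    · rw [Matrix.single_apply_same]
    · intro m _ hm
      rw [Matrix.single_apply_of_ne (h := by tauto), mul_zero]
    · intro h; exact absurd (Finset.mem_univ _) h
  · rw [if_neg hl]
    apply Finset.sum_eq_zero
    intro m _
    rw [Matrix.single_apply_of_ne (h := by tauto), mul_zero]

lemma std_mul_apply {N : ℕ} (M : Matrix (Fin N) (Fin N) R) (p q : Fin N) (t : R)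
    (k l : Fin N) :
    (Matrix.single q p t * M) k l = if k = q then t * M p l else 0 := by
  rw [Matrix.mul_apply]
  rcases eq_or_ne k q with rfl | hk
  · rw [if_pos rfl, Finset.sum_eq_single p]
    · rw [Matrix.single_apply_same]
    · intro m _ hm
      rw [Matrix.single_apply_of_ne (h := by tauto), zero_mul]
    · intro h; exact absurd (Finset.mem_univ _) h
  · rw [if_neg hk]
    apply Finset.sum_eq_zero
    intro m _
    rw [Matrix.single_apply_of_ne (h := by tauto), zero_mul]

lemma transvect_eq_rcUpd {N : ℕ} (A : Matrix (Fin N) (Fin N) R)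
    (hskew : ∀ k l, A l k = -A k l) (hdiag : ∀ k, A k k = 0)
    (p q : Fin N) (hpq : p ≠ q) (t : R) :
    (1 + Matrix.single q p t) * A * (1 + Matrix.single p q t)
      = rcUpd A q (fun l => A q l + t * A p l) := by
  have expand : (1 + Matrix.single q p t) * A * (1 + Matrix.single p q t)
      = A + A * Matrix.single p q t + Matrix.single q p t * A
        + Matrix.single q p t * (A * Matrix.single p q t) := by
    noncomm_ring
  rw [expand]
  ext k l
  simp only [Matrix.add_apply]
  rw [mul_std_apply, std_mul_apply, std_mul_apply, mul_std_apply]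
  simp only [rcUpd]
  by_cases hk : k = q
  · by_cases hl : l = q
    · rw [if_pos hl, if_pos hk, if_pos hk, if_pos hl, if_pos hk, if_pos hl]
      rw [hk, hl]
      linear_combination hdiag q + t * hskew p q + t * t * hdiag p
    · rw [if_neg hl, if_pos hk, if_pos hk, if_neg hl, if_pos hk, if_neg hl]
      subst hk; ring
  · by_cases hl : l = q
    · rw [if_pos hl, if_neg hk, if_neg hk, if_pos hl, if_neg hk, if_pos hl]
      rw [hl]
      linear_combination hskew q k + t * hskew p k
    · rw [if_neg hl, if_neg hk, if_neg hk, if_neg hl, if_neg hk, if_neg hl]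
      ring

lemma pf_transvect_mat (n : ℕ) (A : Matrix (Fin (2*(n+1))) (Fin (2*(n+1))) R)
    (hskew : ∀ k l, A l k = -A k l) (hdiag : ∀ k, A k k = 0)
    (p q : Fin (2*(n+1))) (hpq : p ≠ q) (t : R) :
    pfaffian (n+1) ((1 + Matrix.single q p t) * A * (1 + Matrix.single p q t))
      = pfaffian (n+1) A := by
  rw [transvect_eq_rcUpd A hskew hdiag p q hpq t]
  exact pf_rcUpd_transvect n A hskew hdiag p q hpq t

lemma std_transpose {N : ℕ} (i j : Fin N) (a : R) :
    (1 + Matrix.single i j a)ᵀ = 1 + Matrix.single j i a := by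
  rw [Matrix.transpose_add, Matrix.transpose_one]
  congr 1
  ext k l
  rw [Matrix.transpose_apply]
  by_cases hk : k = j
  · by_cases hl : l = i
    · subst hk; subst hl
      rw [Matrix.single_apply_same, Matrix.single_apply_same]
    · rw [Matrix.single_apply_of_ne (h := by tauto),
        Matrix.single_apply_of_ne (h := by tauto)]
  · rw [Matrix.single_apply_of_ne (h := by tauto),
      Matrix.single_apply_of_ne (h := by tauto)]



lemma std_mul_std {N : ℕ} (p q : Fin N) (hpq : p ≠ q) (a b : R) :
    Matrix.single p q a * Matrix.single p q b = 0 := by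
  ext k l
  rw [mul_std_apply]
  rw [Matrix.zero_apply]
  split_ifs
  · rw [Matrix.single_apply_of_ne (h := by tauto), zero_mul]
  · rfl

lemma std_add_neg {N : ℕ} (p q : Fin N) (t : R) :
    Matrix.single p q t + Matrix.single p q (-t) = 0 := by
  ext k l
  simp only [Matrix.add_apply, Matrix.zero_apply]
  by_cases h : k = p ∧ l = q
  · obtain ⟨rfl, rfl⟩ := h
    rw [Matrix.single_apply_same, Matrix.single_apply_same]; ring
  · rw [Matrix.single_apply_of_ne (h := by tauto),
      Matrix.single_apply_of_ne (h := by tauto), add_zero]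

lemma transvect_mul_inv {N : ℕ} (p q : Fin N) (hpq : p ≠ q) (t s : R) :
    (1 + Matrix.single p q t) * (1 + Matrix.single p q s)
      = 1 + Matrix.single p q (t + s) := by
  rw [add_mul, mul_add, mul_add, one_mul, mul_one, one_mul, std_mul_std p q hpq]
  rw [add_zero, add_assoc, ← Matrix.single_add, add_comm s t]

def mkT {N : ℕ} (p q : Fin N) (hpq : p ≠ q) (t : R) : (Matrix (Fin N) (Fin N) R)ˣ where
  val := 1 + Matrix.single p q t
  inv := 1 + Matrix.single p q (-t)
  val_inv := by rw [transvect_mul_inv p q hpq]; simp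
  inv_val := by rw [transvect_mul_inv p q hpq]; simp

lemma mkT_coe {N : ℕ} (p q : Fin N) (hpq : p ≠ q) (t : R) :
    ((mkT p q hpq t : (Matrix (Fin N) (Fin N) R)ˣ) : Matrix (Fin N) (Fin N) R)
      = 1 + Matrix.single p q t := rfl

lemma mkT_mem {N : ℕ} (p q : Fin N) (hpq : p ≠ q) (t : R) :
    mkT p q hpq t ∈ ElemGroup N R :=
  Subgroup.subset_closure ⟨p, q, t, hpq, rfl⟩

/-- congruence preserves skew, diag, pfaffian -/
def Pres (n : ℕ) (E : Matrix (Fin (2*(n+1))) (Fin (2*(n+1))) R) : Prop :=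
  ∀ A : Matrix (Fin (2*(n+1))) (Fin (2*(n+1))) R,
    (∀ k l, A l k = -A k l) → (∀ k, A k k = 0) →
    (∀ k l, (Eᵀ * A * E) l k = -(Eᵀ * A * E) k l) ∧ (∀ k, (Eᵀ * A * E) k k = 0)
    ∧ pfaffian (n+1) (Eᵀ * A * E) = pfaffian (n+1) A

lemma pres_gen (n : ℕ) (i j : Fin (2*(n+1))) (hij : i ≠ j) (a : R) :
    Pres n (1 + Matrix.single i j a) := by
  intro A hskew hdiag
  rw [std_transpose, transvect_eq_rcUpd A hskew hdiag i j hij a]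
  exact ⟨rcUpd_skew A hskew j _, rcUpd_diag A hdiag j _,
    pf_rcUpd_transvect n A hskew hdiag i j hij a⟩

lemma pres_one (n : ℕ) : Pres n (1 : Matrix (Fin (2*(n+1))) (Fin (2*(n+1))) R) := by
  intro A hskew hdiag
  rw [Matrix.transpose_one, Matrix.one_mul, Matrix.mul_one]
  exact ⟨hskew, hdiag, rfl⟩

lemma pres_mul (n : ℕ) (E F : Matrix (Fin (2*(n+1))) (Fin (2*(n+1))) R)
    (hE : Pres n E) (hF : Pres n F) : Pres n (E * F) := by
  intro A hskew hdiag
  have key : (E * F)ᵀ * A * (E * F) = Fᵀ * (Eᵀ * A * E) * F := by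
    rw [Matrix.transpose_mul]
    noncomm_ring
  rw [key]
  obtain ⟨h1, h2, h3⟩ := hE A hskew hdiag
  obtain ⟨g1, g2, g3⟩ := hF _ h1 h2
  exact ⟨g1, g2, g3.trans h3⟩

lemma pres_elem (n : ℕ) (E : (Matrix (Fin (2*(n+1))) (Fin (2*(n+1))) R)ˣ)
    (hE : E ∈ ElemGroup (2*(n+1)) R) :
    Pres n (E : Matrix (Fin (2*(n+1))) (Fin (2*(n+1))) R) := by
  have main : Pres n (E : Matrix (Fin (2*(n+1))) (Fin (2*(n+1))) R)
      ∧ Pres n ((E⁻¹ : (Matrix (Fin (2*(n+1))) (Fin (2*(n+1))) R)ˣ)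
          : Matrix (Fin (2*(n+1))) (Fin (2*(n+1))) R) := by
    induction hE using Subgroup.closure_induction with
    | mem x hx =>
      obtain ⟨i, j, a, hij, hx⟩ := hx
      have hxe : (x : Matrix (Fin (2*(n+1))) (Fin (2*(n+1))) R)
          = 1 + Matrix.single i j a := hx
      have hinv : ((x⁻¹ : (Matrix (Fin (2*(n+1))) (Fin (2*(n+1))) R)ˣ)
            : Matrix (Fin (2*(n+1))) (Fin (2*(n+1))) R)
          = 1 + Matrix.single i j (-a) := by
        have h1 : (1 + Matrix.single i j (-a))
            * (x : Matrix (Fin (2*(n+1))) (Fin (2*(n+1))) R) = 1 := by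
          rw [hxe, transvect_mul_inv i j hij]; simp
        calc ((x⁻¹ : (Matrix (Fin (2*(n+1))) (Fin (2*(n+1))) R)ˣ) : Matrix _ _ R)
            = 1 * ((x⁻¹ : (Matrix (Fin (2*(n+1))) (Fin (2*(n+1))) R)ˣ) : Matrix _ _ R) := by
              rw [Matrix.one_mul]
          _ = (1 + Matrix.single i j (-a))
              * ((x : Matrix _ _ R) * ((x⁻¹ : (Matrix _ _ R)ˣ) : Matrix _ _ R)) := by
              rw [← Matrix.mul_assoc, h1, Matrix.one_mul]
          _ = 1 + Matrix.single i j (-a) := by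
              rw [Units.mul_inv, Matrix.mul_one]
      rw [hxe, hinv]
      exact ⟨pres_gen n i j hij a, pres_gen n i j hij (-a)⟩
    | one =>
      constructor <;> simpa using pres_one n
    | mul x y hx hy ihx ihy =>
      refine ⟨?_, ?_⟩
      · rw [Units.val_mul]; exact pres_mul n _ _ ihx.1 ihy.1
      · rw [_root_.mul_inv_rev, Units.val_mul]; exact pres_mul n _ _ ihy.2 ihx.2
    | inv x hx ihx =>
      exact ⟨ihx.2, by rw [inv_inv]; exact ihx.1⟩
  exact main.1

def cg {N : ℕ} (E : (Matrix (Fin N) (Fin N) R)ˣ) (A : Matrix (Fin N) (Fin N) R) :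
    Matrix (Fin N) (Fin N) R :=
  ((E : Matrix (Fin N) (Fin N) R))ᵀ * A * (E : Matrix (Fin N) (Fin N) R)

lemma cg_one {N : ℕ} (A : Matrix (Fin N) (Fin N) R) : cg 1 A = A := by
  simp [cg]

lemma cg_mul {N : ℕ} (E F : (Matrix (Fin N) (Fin N) R)ˣ) (A : Matrix (Fin N) (Fin N) R) :
    cg (E * F) A = cg F (cg E A) := by
  simp only [cg, Units.val_mul, Matrix.transpose_mul]
  noncomm_ring

lemma cg_mkT {N : ℕ} (A : Matrix (Fin N) (Fin N) R)
    (hskew : ∀ k l, A l k = -A k l) (hdiag : ∀ k, A k k = 0)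
    (p q : Fin N) (hpq : p ≠ q) (t : R) :
    cg (mkT p q hpq t) A = rcUpd A q (fun l => A q l + t * A p l) := by
  rw [cg, mkT_coe, std_transpose]
  exact transvect_eq_rcUpd A hskew hdiag p q hpq t

lemma rcUpd_row {N : ℕ} (A : Matrix (Fin N) (Fin N) R) (q : Fin N) (w : Fin N → R)
    (l : Fin N) (hl : l ≠ q) : rcUpd A q w q l = w l := by
  simp [rcUpd, hl]

lemma rcUpd_col {N : ℕ} (A : Matrix (Fin N) (Fin N) R) (q : Fin N) (w : Fin N → R)
    (k : Fin N) (hk : k ≠ q) : rcUpd A q w k q = -w k := by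
  simp [rcUpd, hk]

lemma add_unit' [IsLocalRing R] {x y : R} (hx : ¬ IsUnit x) (hy : IsUnit y) :
    IsUnit (x + y) := by
  by_contra h
  have h2 : -x + (x + y) ∈ nonunits R :=
    IsLocalRing.nonunits_add (fun hu => hx (by simpa using hu.neg)) h
  rw [neg_add_cancel_left] at h2
  exact h2 hy

lemma stageA (n : ℕ) [IsLocalRing R] (A : Matrix (Fin (2*(n+1))) (Fin (2*(n+1))) R)
    (hskew : ∀ k l, A l k = -A k l) (hdiag : ∀ k, A k k = 0)
    (hpf : pfaffian (n+1) A = 1) :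
    ∃ E ∈ ElemGroup (2*(n+1)) R, IsUnit ((cg E A) (z n) (o n)) := by
  classical
  have h1 : ∃ j : Fin (2*n+1), IsUnit (A (z n) (ci j)) := by
    by_contra h
    push_neg at h
    have hmem : pfaffian (n+1) A ∈ IsLocalRing.maximalIdeal R := by
      rw [pf_succ]
      apply Ideal.sum_mem
      intro j _
      have hj : A (z n) (ci j) ∈ IsLocalRing.maximalIdeal R :=
        (IsLocalRing.mem_maximalIdeal _).2 (h j)
      have he : (-1:R)^(j:ℕ) * A (z n) (ci j)
            * pfaffian n (A.submatrix (mm j) (mm j))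
          = ((-1:R)^(j:ℕ) * pfaffian n (A.submatrix (mm j) (mm j))) * A (z n) (ci j) := by
        ring
      rw [he]
      exact Ideal.mul_mem_left _ _ hj
    rw [hpf] at hmem
    exact (IsLocalRing.maximalIdeal.isMaximal R).ne_top
      (Ideal.eq_top_of_isUnit_mem _ hmem isUnit_one)
  obtain ⟨j, hj⟩ := h1
  by_cases h0 : IsUnit (A (z n) (o n))
  · exact ⟨1, one_mem _, by rwa [cg_one]⟩
  · have hjo : ci j ≠ o n := fun h => h0 (h ▸ hj)
    refine ⟨mkT (ci j) (o n) hjo 1, mkT_mem _ _ _ _, ?_⟩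
    rw [cg_mkT A hskew hdiag _ _ hjo 1, rcUpd_col _ _ _ _ (zo_ne n)]
    have he : -(A (o n) (z n) + 1 * A (ci j) (z n)) = A (z n) (o n) + A (z n) (ci j) := by
      have h1 := hskew (z n) (o n)
      have h2 := hskew (z n) (ci j)
      linear_combination - h1 - h2
    rw [he]
    exact add_unit' h0 hj

lemma stageB (n : ℕ) [IsLocalRing R] (hn : 1 ≤ n)
    (B : Matrix (Fin (2*(n+1))) (Fin (2*(n+1))) R)
    (hskew : ∀ k l, B l k = -B k l) (hdiag : ∀ k, B k k = 0)
    (hu : IsUnit (B (z n) (o n))) :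
    ∃ E ∈ ElemGroup (2*(n+1)) R, (cg E B) (z n) (o n) = 1 := by
  classical
  set tw : Fin (2*(n+1)) := ⟨2, by omega⟩ with htw
  have hztw : z n ≠ tw := fun h => by
    have := congrArg Fin.val h; rw [z_val] at this; simp [htw] at this
  have hotw : o n ≠ tw := fun h => by
    have := congrArg Fin.val h; rw [o_val] at this; simp [htw] at this
  have htwo : tw ≠ o n := fun h => hotw h.symm
  set s : R := if IsUnit (B (z n) tw) then 0 else 1 with hs
  set F1 := mkT (o n) tw hotw s with hF1
  set B1 := cg F1 B with hB1def
  have hB1e : B1 = rcUpd B tw (fun l => B tw l + s * B (o n) l) :=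
    cg_mkT B hskew hdiag (o n) tw hotw s
  have skew1 : ∀ k l, B1 l k = -B1 k l := by rw [hB1e]; exact rcUpd_skew B hskew tw _
  have diag1 : ∀ k, B1 k k = 0 := by rw [hB1e]; exact rcUpd_diag B hdiag tw _
  have hB1zo : B1 (z n) (o n) = B (z n) (o n) := by
    rw [hB1e]; exact rcUpd_apply_ne_ne B tw _ hztw hotw
  have hB1ztw : B1 (z n) tw = B (z n) tw + s * B (z n) (o n) := by
    rw [hB1e, rcUpd_col _ _ _ _ hztw]
    have h1 := hskew (z n) tw
    have h2 := hskew (z n) (o n)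
    linear_combination - h1 - s * h2
  have hc : IsUnit (B1 (z n) tw) := by
    rw [hB1ztw, hs]
    by_cases h : IsUnit (B (z n) tw)
    · simpa [h] using h
    · rw [if_neg h, one_mul]
      exact add_unit' h hu
  set r : R := (↑hc.unit⁻¹ : R) * (1 - B1 (z n) (o n)) with hr
  refine ⟨F1 * mkT tw (o n) htwo r, mul_mem (mkT_mem _ _ _ _) (mkT_mem _ _ _ _), ?_⟩
  rw [cg_mul, ← hB1def, cg_mkT B1 skew1 diag1 tw (o n) htwo r,
    rcUpd_col _ _ _ _ (zo_ne n)]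
  have he : -(B1 (o n) (z n) + r * B1 tw (z n)) = B1 (z n) (o n) + r * B1 (z n) tw := by
    have h1 := skew1 (z n) (o n)
    have h2 := skew1 (z n) tw
    linear_combination - h1 - r * h2
  rw [he, hr]
  have hcc : (↑hc.unit⁻¹ : R) * B1 (z n) tw = 1 := by
    have := hc.unit.inv_mul
    rwa [IsUnit.unit_spec] at this
  linear_combination (1 - B1 (z n) (o n)) * hcc

lemma stageC (n : ℕ) (K : ℕ) :
    ∀ (B : Matrix (Fin (2*(n+1))) (Fin (2*(n+1))) R),
    (∀ k l, B l k = -B k l) → (∀ k, B k k = 0) → B (z n) (o n) = 1 →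
    ∃ E ∈ ElemGroup (2*(n+1)) R, (cg E B) (z n) (o n) = 1 ∧
      ∀ l : Fin (2*(n+1)), 2 ≤ (l:ℕ) → (l:ℕ) < K →
        (cg E B) (z n) l = 0 ∧ (cg E B) (o n) l = 0 := by
  induction K with
  | zero =>
    intro B _ _ h01
    exact ⟨1, one_mem _, by rwa [cg_one], fun l h1 h2 => absurd h2 (by omega)⟩
  | succ K ih =>
    intro B hskew hdiag h01
    obtain ⟨E, hEmem, hE01, hEcl⟩ := ih B hskew hdiag h01
    by_cases hK : 2 ≤ K ∧ K < 2*(n+1)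
    · set C := cg E B with hC
      have skC : ∀ k l, C l k = -C k l := (pres_elem n E hEmem B hskew hdiag).1
      have dgC : ∀ k, C k k = 0 := (pres_elem n E hEmem B hskew hdiag).2.1
      set qK : Fin (2*(n+1)) := ⟨K, hK.2⟩ with hqK
      have hzq : z n ≠ qK := fun h => by
        have := congrArg Fin.val h; rw [z_val] at this; simp [hqK] at this; omega
      have hoq : o n ≠ qK := fun h => by
        have := congrArg Fin.val h; rw [o_val] at this; simp [hqK] at this; omega
      set t1 : R := -(C (z n) qK) with ht1
      set F1 := mkT (o n) qK hoq t1 with hF1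
      set C1 := cg F1 C with hC1def
      have hC1e : C1 = rcUpd C qK (fun l => C qK l + t1 * C (o n) l) :=
        cg_mkT C skC dgC (o n) qK hoq t1
      have skC1 : ∀ k l, C1 l k = -C1 k l := by rw [hC1e]; exact rcUpd_skew C skC qK _
      have dgC1 : ∀ k, C1 k k = 0 := by rw [hC1e]; exact rcUpd_diag C dgC qK _
      have hC1zq : C1 (z n) qK = 0 := by
        rw [hC1e, rcUpd_col _ _ _ _ hzq]
        have h1 := skC (z n) qK
        have h2 := skC (z n) (o n)
        rw [ht1]
        linear_combination - h1 + (C (z n) qK) * h2 - (C (z n) qK) * hE01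
      have hC1oq : C1 (o n) qK = -(C qK (o n) + t1 * C (o n) (o n)) := by
        rw [hC1e, rcUpd_col _ _ _ _ hoq]
      have hC1zo : C1 (z n) (o n) = 1 := by
        rw [hC1e, rcUpd_apply_ne_ne C qK _ hzq hoq]; exact hE01
      have hC1keep : ∀ l : Fin (2*(n+1)), l ≠ qK →
          C1 (z n) l = C (z n) l ∧ C1 (o n) l = C (o n) l := by
        intro l hl
        rw [hC1e]
        exact ⟨rcUpd_apply_ne_ne C qK _ hzq hl, rcUpd_apply_ne_ne C qK _ hoq hl⟩
      set t2 : R := C1 (o n) qK with ht2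
      set F2 := mkT (z n) qK hzq t2 with hF2
      set C2 := cg F2 C1 with hC2def
      have hC2e : C2 = rcUpd C1 qK (fun l => C1 qK l + t2 * C1 (z n) l) :=
        cg_mkT C1 skC1 dgC1 (z n) qK hzq t2
      have hC2oq : C2 (o n) qK = 0 := by
        rw [hC2e, rcUpd_col _ _ _ _ hoq]
        have h1 := skC1 (o n) qK
        have h2 := skC1 (o n) (z n)
        rw [ht2]
        linear_combination - h1 - C1 (o n) qK * hC1zo
      have hC2zq : C2 (z n) qK = 0 := by
        rw [hC2e, rcUpd_col _ _ _ _ hzq]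
        have h1 := skC1 (z n) qK
        have h2 := dgC1 (z n)
        rw [ht2]
        linear_combination - h1 + hC1zq - C1 (o n) qK * h2
      have hC2zo : C2 (z n) (o n) = 1 := by
        rw [hC2e, rcUpd_apply_ne_ne C1 qK _ hzq hoq]; exact hC1zo
      have hC2keep : ∀ l : Fin (2*(n+1)), l ≠ qK →
          C2 (z n) l = C1 (z n) l ∧ C2 (o n) l = C1 (o n) l := by
        intro l hl
        rw [hC2e]
        exact ⟨rcUpd_apply_ne_ne C1 qK _ hzq hl, rcUpd_apply_ne_ne C1 qK _ hoq hl⟩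
      refine ⟨E * F1 * F2, mul_mem (mul_mem hEmem (mkT_mem _ _ _ _)) (mkT_mem _ _ _ _), ?_, ?_⟩
      · rw [cg_mul, cg_mul, ← hC, ← hC1def, ← hC2def]
        exact hC2zo
      · intro l hl2 hlK
        rw [cg_mul, cg_mul, ← hC, ← hC1def, ← hC2def]
        rcases eq_or_ne l qK with rfl | hlq
        · exact ⟨hC2zq, hC2oq⟩
        · have hlK' : (l:ℕ) < K := by
            have : (l:ℕ) ≠ K := fun h => hlq (Fin.ext (show (l:ℕ) = (qK:ℕ) from h))
            omega
          have h1 := hC2keep l hlq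
          have h2 := hC1keep l hlq
          have h3 := hEcl l hl2 hlK'
          rw [h1.1, h1.2, h2.1, h2.2]
          exact h3
    · refine ⟨E, hEmem, hE01, fun l h2 hK1 => ?_⟩
      have hl := l.isLt
      have : (l:ℕ) < K := by
        rcases Nat.lt_or_ge K 2 with h | h
        · omega
        · have : ¬ K < 2*(n+1) := fun hh => hK ⟨h, hh⟩
          omega
      exact hEcl l h2 this

lemma normalize (n : ℕ) [IsLocalRing R] (hn : 1 ≤ n)
    (A : Matrix (Fin (2*(n+1))) (Fin (2*(n+1))) R)
    (hskew : ∀ k l, A l k = -A k l) (hdiag : ∀ k, A k k = 0)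
    (hpf : pfaffian (n+1) A = 1) :
    ∃ E ∈ ElemGroup (2*(n+1)) R, (cg E A) (z n) (o n) = 1 ∧
      ∀ l : Fin (2*(n+1)), 2 ≤ (l:ℕ) →
        (cg E A) (z n) l = 0 ∧ (cg E A) (o n) l = 0 := by
  obtain ⟨E1, h1, hu⟩ := stageA n A hskew hdiag hpf
  have sk1 : ∀ k l, (cg E1 A) l k = -(cg E1 A) k l := (pres_elem n E1 h1 A hskew hdiag).1
  have dg1 : ∀ k, (cg E1 A) k k = 0 := (pres_elem n E1 h1 A hskew hdiag).2.1
  obtain ⟨E2, h2, h01⟩ := stageB n hn (cg E1 A) sk1 dg1 hu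
  rw [← cg_mul] at h01
  have sk2 : ∀ k l, (cg (E1*E2) A) l k = -(cg (E1*E2) A) k l :=
    (pres_elem n (E1*E2) (mul_mem h1 h2) A hskew hdiag).1
  have dg2 : ∀ k, (cg (E1*E2) A) k k = 0 :=
    (pres_elem n (E1*E2) (mul_mem h1 h2) A hskew hdiag).2.1
  obtain ⟨E3, h3, h01', hcl⟩ := stageC n (2*(n+1)) (cg (E1*E2) A) sk2 dg2 h01
  rw [← cg_mul] at h01' hcl
  exact ⟨E1 * E2 * E3, mul_mem (mul_mem h1 h2) h3, h01',
    fun l hl => hcl l hl l.isLt⟩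

def eqv (n : ℕ) : Fin 2 ⊕ Fin (2*n) ≃ Fin (2*(n+1)) :=
  finSumFinEquiv.trans (finCongr (by omega))

lemma eqv_inl_val (n : ℕ) (i : Fin 2) : ((eqv n (Sum.inl i)) : ℕ) = (i:ℕ) := by
  simp [eqv]

lemma eqv_inr_val (n : ℕ) (i : Fin (2*n)) : ((eqv n (Sum.inr i)) : ℕ) = 2 + (i:ℕ) := by
  simp [eqv]; omega

def emb {n : ℕ} (X : Matrix (Fin (2*n)) (Fin (2*n)) R) :
    Matrix (Fin (2*(n+1))) (Fin (2*(n+1))) R :=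
  (Matrix.fromBlocks 1 0 0 X).submatrix (eqv n).symm (eqv n).symm

lemma emb_one (n : ℕ) : emb (1 : Matrix (Fin (2*n)) (Fin (2*n)) R) = 1 := by
  rw [emb, Matrix.fromBlocks_one, Matrix.submatrix_one_equiv]

lemma emb_mul {n : ℕ} (X Y : Matrix (Fin (2*n)) (Fin (2*n)) R) :
    emb X * emb Y = emb (X * Y) := by
  rw [emb, emb, emb, Matrix.submatrix_mul_equiv, Matrix.fromBlocks_multiply]
  congr 1
  simp

lemma emb_transpose {n : ℕ} (X : Matrix (Fin (2*n)) (Fin (2*n)) R) :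
    (emb X)ᵀ = emb Xᵀ := by
  rw [emb, emb, Matrix.transpose_submatrix, Matrix.fromBlocks_transpose]
  congr 1
  simp

def embHom (n : ℕ) : Matrix (Fin (2*n)) (Fin (2*n)) R →* Matrix (Fin (2*(n+1))) (Fin (2*(n+1))) R where
  toFun := emb
  map_one' := emb_one n
  map_mul' := fun X Y => (emb_mul X Y).symm

lemma emb_std {n : ℕ} (i j : Fin (2*n)) (a : R) :
    emb (1 + Matrix.single i j a)
      = 1 + Matrix.single (eqv n (Sum.inr i)) (eqv n (Sum.inr j)) a := by
  have h1 : (Matrix.fromBlocks 1 0 0 (1 + Matrix.single i j a) :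
      Matrix (Fin 2 ⊕ Fin (2*n)) (Fin 2 ⊕ Fin (2*n)) R)
      = Matrix.fromBlocks 1 0 0 1 + Matrix.fromBlocks 0 0 0 (Matrix.single i j a) := by
    rw [Matrix.fromBlocks_add]
    simp
  rw [emb, h1]
  have h2 : ∀ (M N : Matrix (Fin 2 ⊕ Fin (2*n)) (Fin 2 ⊕ Fin (2*n)) R),
      (M + N).submatrix (⇑(eqv n).symm) (⇑(eqv n).symm)
        = M.submatrix (⇑(eqv n).symm) (⇑(eqv n).symm)
          + N.submatrix (⇑(eqv n).symm) (⇑(eqv n).symm) := fun M N => rfl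
  rw [h2, Matrix.fromBlocks_one, Matrix.submatrix_one_equiv]
  congr 1
  ext k l
  rw [Matrix.submatrix_apply]
  rcases hek : (eqv n).symm k with ik | ik <;> rcases hel : (eqv n).symm l with jl | jl
  · have hk : k ≠ eqv n (Sum.inr i) := by
      intro h; rw [h, Equiv.symm_apply_apply] at hek; exact absurd hek (by simp)
    rw [Matrix.fromBlocks_apply₁₁, Matrix.single_apply_of_ne (h := by tauto)]
    simp
  · have hk : k ≠ eqv n (Sum.inr i) := by
      intro h; rw [h, Equiv.symm_apply_apply] at hek; exact absurd hek (by simp)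
    rw [Matrix.fromBlocks_apply₁₂, Matrix.single_apply_of_ne (h := by tauto)]
    simp
  · have hl : l ≠ eqv n (Sum.inr j) := by
      intro h; rw [h, Equiv.symm_apply_apply] at hel; exact absurd hel (by simp)
    rw [Matrix.fromBlocks_apply₂₁, Matrix.single_apply_of_ne (h := by tauto)]
    simp
  · rw [Matrix.fromBlocks_apply₂₂]
    have hk : k = eqv n (Sum.inr ik) := by
      rw [← hek, Equiv.apply_symm_apply]
    have hl : l = eqv n (Sum.inr jl) := by
      rw [← hel, Equiv.apply_symm_apply]
    by_cases h : ik = i ∧ jl = j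
    · obtain ⟨rfl, rfl⟩ := h
      rw [Matrix.single_apply_same, hk, hl, Matrix.single_apply_same]
    · have h2 : ¬(k = eqv n (Sum.inr i) ∧ l = eqv n (Sum.inr j)) := by
        intro ⟨ha, hb⟩
        apply h
        constructor
        · exact Sum.inr_injective ((eqv n).injective (hk.symm.trans ha))
        · exact Sum.inr_injective ((eqv n).injective (hl.symm.trans hb))
      rw [Matrix.single_apply_of_ne (h := by tauto),
        Matrix.single_apply_of_ne (h := by tauto)]

lemma emb_elem (n : ℕ) (E : (Matrix (Fin (2*n)) (Fin (2*n)) R)ˣ)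
    (hE : E ∈ ElemGroup (2*n) R) :
    Units.map (embHom n (R := R)) E ∈ ElemGroup (2*(n+1)) R := by
  induction hE using Subgroup.closure_induction with
  | mem x hx =>
    obtain ⟨i, j, a, hij, hx⟩ := hx
    apply Subgroup.subset_closure
    refine ⟨eqv n (Sum.inr i), eqv n (Sum.inr j), a,
      fun h => hij (Sum.inr_injective ((eqv n).injective h)), ?_⟩
    show embHom n (x : Matrix (Fin (2*n)) (Fin (2*n)) R) = _
    show emb (x : Matrix (Fin (2*n)) (Fin (2*n)) R) = _
    rw [hx]
    exact emb_std i j a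
  | one => rw [_root_.map_one]; exact one_mem _
  | mul x y hx hy ihx ihy => rw [_root_.map_mul]; exact mul_mem ihx ihy
  | inv x hx ihx => rw [_root_.map_inv]; exact inv_mem ihx

def psiTwo : Matrix (Fin 2) (Fin 2) R :=
  Matrix.of fun i j => if (i:ℕ) = 0 ∧ (j:ℕ) = 1 then 1 else if (i:ℕ) = 1 ∧ (j:ℕ) = 0 then -1 else 0

lemma psi_apply (n : ℕ) (k l : Fin (2*n)) :
    psiMat n R k l = if (k:ℕ) % 2 = 0 ∧ (l:ℕ) = (k:ℕ) + 1 then 1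
      else if (k:ℕ) % 2 = 1 ∧ (k:ℕ) = (l:ℕ) + 1 then -1 else 0 := rfl

lemma psi_block (n : ℕ) :
    psiMat (n+1) R = (Matrix.fromBlocks (psiTwo (R := R)) 0 0 (psiMat n R)).submatrix
      ((eqv n).symm) ((eqv n).symm) := by
  ext k l
  rw [Matrix.submatrix_apply]
  rcases hek : (eqv n).symm k with ik | ik <;> rcases hel : (eqv n).symm l with jl | jl <;>
    [skip; skip; skip; skip] <;>
    (have hk := (Equiv.symm_apply_eq (eqv n)).1 hek;
     have hl := (Equiv.symm_apply_eq (eqv n)).1 hel)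
  · rw [Matrix.fromBlocks_apply₁₁]
    have hkv : (k:ℕ) = (ik:ℕ) := by rw [hk, eqv_inl_val]
    have hlv : (l:ℕ) = (jl:ℕ) := by rw [hl, eqv_inl_val]
    have hik := ik.isLt
    have hjl := jl.isLt
    rw [psi_apply, psiTwo, Matrix.of_apply]
    split_ifs <;> first | rfl | omega
  · rw [Matrix.fromBlocks_apply₁₂, Matrix.zero_apply]
    have hkv : (k:ℕ) = (ik:ℕ) := by rw [hk, eqv_inl_val]
    have hlv : (l:ℕ) = 2 + (jl:ℕ) := by rw [hl, eqv_inr_val]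
    have hik := ik.isLt
    rw [psi_apply]
    split_ifs <;> first | rfl | omega
  · rw [Matrix.fromBlocks_apply₂₁, Matrix.zero_apply]
    have hkv : (k:ℕ) = 2 + (ik:ℕ) := by rw [hk, eqv_inr_val]
    have hlv : (l:ℕ) = (jl:ℕ) := by rw [hl, eqv_inl_val]
    have hjl := jl.isLt
    rw [psi_apply]
    split_ifs <;> first | rfl | omega
  · rw [Matrix.fromBlocks_apply₂₂]
    have hkv : (k:ℕ) = 2 + (ik:ℕ) := by rw [hk, eqv_inr_val]
    have hlv : (l:ℕ) = 2 + (jl:ℕ) := by rw [hl, eqv_inr_val]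
    rw [psi_apply, psi_apply]
    split_ifs <;> first | rfl | omega

theorem pf_main [IsLocalRing R] : ∀ (n : ℕ) (A : Matrix (Fin (2*n)) (Fin (2*n)) R),
    (∀ k l, A l k = -A k l) → (∀ k, A k k = 0) → pfaffian n A = 1 →
    ∃ ε ∈ ElemGroup (2*n) R,
      A = (ε : Matrix (Fin (2*n)) (Fin (2*n)) R)ᵀ * psiMat n R
          * (ε : Matrix (Fin (2*n)) (Fin (2*n)) R)
  | 0, A, hskew, hdiag, hpf => by
    refine ⟨1, one_mem _, ?_⟩
    ext k l
    exact absurd k.isLt (by omega)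
  | 1, A, hskew, hdiag, hpf => by
    have h0 : pfaffian 0 (A.submatrix (mm (⟨0, by omega⟩ : Fin (2*0+1)))
        (mm (⟨0, by omega⟩ : Fin (2*0+1)))) = 1 := rfl
    have h := pf_succ 0 A
    rw [Finset.sum_eq_single (⟨0, by omega⟩ : Fin (2*0+1))] at h
    · rw [h0, ci0_eq_o' _ rfl] at h
      have h1 : A (z 0) (o 0) = 1 := by
        rw [← hpf, h]; ring
      refine ⟨1, one_mem _, ?_⟩
      rw [Units.val_one, Matrix.transpose_one, Matrix.one_mul, Matrix.mul_one]
      ext k l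
      have hk := k.isLt
      have hl := l.isLt
      have hk' : k = z 0 ∨ k = o 0 := by
        rcases eq_or_ne (k:ℕ) 0 with h2 | h2
        · left; exact Fin.ext h2
        · right; exact Fin.ext (by rw [o_val]; omega)
      have hl' : l = z 0 ∨ l = o 0 := by
        rcases eq_or_ne (l:ℕ) 0 with h2 | h2
        · left; exact Fin.ext h2
        · right; exact Fin.ext (by rw [o_val]; omega)
      rcases hk' with rfl | rfl <;> rcases hl' with rfl | rfl
      · rw [hdiag, psi_apply]; norm_num [z_val]
      · rw [h1, psi_apply]; norm_num [z_val, o_val]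
      · have h2 := hskew (z 0) (o 0)
        rw [h2, h1, psi_apply]; norm_num [z_val, o_val]
      · rw [hdiag, psi_apply]; norm_num [o_val]
    · intro b _ hb
      exact absurd (Fin.ext (by omega) : b = ⟨0, by omega⟩) hb
    · intro hmem; exact absurd (Finset.mem_univ _) hmem
  | (m+2), A, hskew, hdiag, hpf => by
    have hn : 1 ≤ m+1 := by omega
    obtain ⟨E, hE, h01, hcl⟩ := normalize (m+1) hn A hskew hdiag hpf
    set B := cg E A with hB
    have skB : ∀ k l, B l k = -B k l := (pres_elem _ E hE A hskew hdiag).1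
    have dgB : ∀ k, B k k = 0 := (pres_elem _ E hE A hskew hdiag).2.1
    have pfB : pfaffian (m+1+1) B = 1 :=
      ((pres_elem _ E hE A hskew hdiag).2.2).trans hpf
    set j0 : Fin (2*(m+1)+1) := ⟨0, by omega⟩ with hj0
    set C := B.submatrix (mm j0) (mm j0) with hC
    have skC := submatrix_skew B skB (mm j0)
    have dgC := submatrix_diag B dgB (mm j0)
    have pfC : pfaffian (m+1) C = 1 := by
      rw [pf_succ (m+1) B, Finset.sum_eq_single j0] at pfB
      · rw [ci0_eq_o' j0 rfl, h01] at pfB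
        rw [← pfB]; ring
      · intro b _ hb
        have hbv : (b:ℕ) ≠ 0 := fun h => hb (Fin.ext h)
        have hz : B (z (m+1)) (ci b) = 0 := (hcl (ci b) (by rw [ci_val]; omega)).1
        rw [hz]; ring
      · intro hmem; exact absurd (Finset.mem_univ _) hmem
    obtain ⟨ε', hε', hCeq⟩ := pf_main (m+1) C skC dgC pfC
    have claim1 : B = (Matrix.fromBlocks (psiTwo (R := R)) 0 0 C).submatrix
        ((eqv (m+1)).symm) ((eqv (m+1)).symm) := by
      ext k l
      rw [Matrix.submatrix_apply]
      rcases hek : (eqv (m+1)).symm k with ik | ik <;>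
        rcases hel : (eqv (m+1)).symm l with jl | jl <;>
        [skip; skip; skip; skip] <;>
        (have hk := (Equiv.symm_apply_eq (eqv (m+1))).1 hek;
         have hl := (Equiv.symm_apply_eq (eqv (m+1))).1 hel)
      · rw [Matrix.fromBlocks_apply₁₁]
        have hkv : (k:ℕ) = (ik:ℕ) := by rw [hk, eqv_inl_val]
        have hlv : (l:ℕ) = (jl:ℕ) := by rw [hl, eqv_inl_val]
        have hik := ik.isLt
        have hjl := jl.isLt
        rcases eq_or_ne (ik:ℕ) 0 with h2 | h2 <;>
          rcases eq_or_ne (jl:ℕ) 0 with h3 | h3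
        · have hkz : k = z (m+1) := Fin.ext (by rw [hkv, h2, z_val])
          have hlz : l = z (m+1) := Fin.ext (by rw [hlv, h3, z_val])
          rw [hkz, hlz, dgB]
          simp [psiTwo, h2, h3]
        · have hkz : k = z (m+1) := Fin.ext (by rw [hkv, h2, z_val])
          have hlo : l = o (m+1) := Fin.ext (by rw [hlv, o_val]; omega)
          have hjl1 : (jl:ℕ) = 1 := by omega
          rw [hkz, hlo, h01]
          simp [psiTwo, h2, hjl1, (Fin.ext h2 : ik = 0)]
        · have hko : k = o (m+1) := Fin.ext (by rw [hkv, o_val]; omega)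
          have hlz : l = z (m+1) := Fin.ext (by rw [hlv, h3, z_val])
          have hik1 : (ik:ℕ) = 1 := by omega
          rw [hko, hlz, skB (z (m+1)) (o (m+1)), h01]
          simp [psiTwo, hik1, h3, (Fin.ext h3 : jl = 0)]
        · have hko : k = o (m+1) := Fin.ext (by rw [hkv, o_val]; omega)
          have hlo : l = o (m+1) := Fin.ext (by rw [hlv, o_val]; omega)
          have hik1 : (ik:ℕ) = 1 := by omega
          have hjl1 : (jl:ℕ) = 1 := by omega
          rw [hko, hlo, dgB]
          simp [psiTwo, hik1, hjl1]
          rw [if_neg (fun h => h2 (congrArg Fin.val h)), if_neg (fun h => h3 (congrArg Fin.val h))]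
      · rw [Matrix.fromBlocks_apply₁₂, Matrix.zero_apply]
        have hkv : (k:ℕ) = (ik:ℕ) := by rw [hk, eqv_inl_val]
        have hlv : (l:ℕ) = 2 + (jl:ℕ) := by rw [hl, eqv_inr_val]
        have hik := ik.isLt
        have hcll := hcl l (by omega)
        rcases eq_or_ne (ik:ℕ) 0 with h2 | h2
        · have hkz : k = z (m+1) := Fin.ext (by rw [hkv, h2, z_val])
          rw [hkz]; exact hcll.1
        · have hko : k = o (m+1) := Fin.ext (by rw [hkv, o_val]; omega)
          rw [hko]; exact hcll.2
      · rw [Matrix.fromBlocks_apply₂₁, Matrix.zero_apply]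
        have hkv : (k:ℕ) = 2 + (ik:ℕ) := by rw [hk, eqv_inr_val]
        have hlv : (l:ℕ) = (jl:ℕ) := by rw [hl, eqv_inl_val]
        have hjl := jl.isLt
        have hclk := hcl k (by omega)
        rcases eq_or_ne (jl:ℕ) 0 with h2 | h2
        · have hlz : l = z (m+1) := Fin.ext (by rw [hlv, h2, z_val])
          rw [hlz, skB (z (m+1)) k, hclk.1, neg_zero]
        · have hlo : l = o (m+1) := Fin.ext (by rw [hlv, o_val]; omega)
          rw [hlo, skB (o (m+1)) k, hclk.2, neg_zero]
      · rw [Matrix.fromBlocks_apply₂₂]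
        have hkv : (k:ℕ) = 2 + (ik:ℕ) := by rw [hk, eqv_inr_val]
        have hlv : (l:ℕ) = 2 + (jl:ℕ) := by rw [hl, eqv_inr_val]
        have hkk : mm j0 ik = k := by
          apply Fin.ext; rw [mm_val]
          simp only [hj0]
          split_ifs <;> omega
        have hll : mm j0 jl = l := by
          apply Fin.ext; rw [mm_val]
          simp only [hj0]
          split_ifs <;> omega
        rw [hC, Matrix.submatrix_apply, hkk, hll]
    rw [hCeq] at claim1
    have claim2 : (Matrix.fromBlocks (psiTwo (R := R)) 0 0
          ((ε' : Matrix (Fin (2*(m+1))) (Fin (2*(m+1))) R)ᵀ * psiMat (m+1) R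
            * (ε' : Matrix (Fin (2*(m+1))) (Fin (2*(m+1))) R))).submatrix
          ((eqv (m+1)).symm) ((eqv (m+1)).symm)
        = (emb ((ε' : Matrix (Fin (2*(m+1))) (Fin (2*(m+1))) R)))ᵀ * psiMat (m+1+1) R
          * emb ((ε' : Matrix (Fin (2*(m+1))) (Fin (2*(m+1))) R)) := by
      rw [emb_transpose, psi_block (m+1), emb, emb,
        Matrix.submatrix_mul_equiv, Matrix.submatrix_mul_equiv]
      congr 1
      rw [Matrix.fromBlocks_multiply, Matrix.fromBlocks_multiply]
      simp [Matrix.mul_assoc]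
    rw [claim2] at claim1
    set εf := Units.map (embHom (m+1) (R := R)) ε' * E⁻¹ with hεf
    refine ⟨εf, mul_mem (emb_elem (m+1) ε' hε') (inv_mem hE), ?_⟩
    have hcoe : (εf : Matrix (Fin (2*(m+2))) (Fin (2*(m+2))) R)
        = emb ((ε' : Matrix (Fin (2*(m+1))) (Fin (2*(m+1))) R))
          * ((E⁻¹ : (Matrix (Fin (2*(m+2))) (Fin (2*(m+2))) R)ˣ)
              : Matrix (Fin (2*(m+2))) (Fin (2*(m+2))) R) := rfl
    rw [hcoe, Matrix.transpose_mul]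
    have h1 : ((E⁻¹ : (Matrix (Fin (2*(m+2))) (Fin (2*(m+2))) R)ˣ)
          : Matrix (Fin (2*(m+2))) (Fin (2*(m+2))) R)ᵀ
        * ((E : (Matrix (Fin (2*(m+2))) (Fin (2*(m+2))) R)ˣ)
          : Matrix (Fin (2*(m+2))) (Fin (2*(m+2))) R)ᵀ = 1 := by
      rw [← Matrix.transpose_mul, Units.mul_inv, Matrix.transpose_one]
    have h2 : ((E : (Matrix (Fin (2*(m+2))) (Fin (2*(m+2))) R)ˣ)
          : Matrix (Fin (2*(m+2))) (Fin (2*(m+2))) R)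
        * ((E⁻¹ : (Matrix (Fin (2*(m+2))) (Fin (2*(m+2))) R)ˣ)
          : Matrix (Fin (2*(m+2))) (Fin (2*(m+2))) R) = 1 := Units.mul_inv E
    have hA : A = ((E⁻¹ : (Matrix (Fin (2*(m+2))) (Fin (2*(m+2))) R)ˣ)
          : Matrix (Fin (2*(m+2))) (Fin (2*(m+2))) R)ᵀ * B
        * ((E⁻¹ : (Matrix (Fin (2*(m+2))) (Fin (2*(m+2))) R)ˣ)
          : Matrix (Fin (2*(m+2))) (Fin (2*(m+2))) R) := by
      rw [hB]
      show A = _ᵀ * ((_ : Matrix (Fin (2*(m+2))) (Fin (2*(m+2))) R)ᵀ * A * _) * _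
      rw [show ∀ (X Y : Matrix (Fin (2*(m+2))) (Fin (2*(m+2))) R),
          Xᵀ * (Yᵀ * A * Y) * X = (Xᵀ * Yᵀ) * A * (Y * X) from
        fun X Y => by noncomm_ring]
      rw [h1, h2, Matrix.one_mul, Matrix.mul_one]
    rw [hA, claim1]
    noncomm_ring

end PfAux

/-- over a local ring, an alternating matrix of Pfaffian 1 is
elementarily congruent to the standard symplectic matrix. -/
theorem stmt12 {R : Type*} [CommRing R] [IsLocalRing R] (n : ℕ)
    (φ : Matrix (Fin (2*n)) (Fin (2*n)) R)
    (halt : IsAlternatingM φ) (hpf : pfaffian n φ = 1) :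
    ∃ ε ∈ ElemGroup (2*n) R,
      φ = (ε : Matrix (Fin (2*n)) (Fin (2*n)) R)ᵀ * psiMat n R *
          (ε : Matrix (Fin (2*n)) (Fin (2*n)) R) := by
  have hskew : ∀ k l, φ l k = -φ k l := fun k l => by
    have h := congrFun (congrFun halt.1 k) l
    rwa [Matrix.transpose_apply, Matrix.neg_apply] at h
  exact PfAux.pf_main n φ hskew halt.2 hpf
end

section
/- Let R be a commutative ring, n ≥ 2, and ε ∈ E_{2n}(R). Then there exists ε_0 ∈ E_{ψ_n}(R) ⊆ E_{2n-1}(R) such that εᵀ ψ_n ε = (1 ⊥ ε_0)ᵀ ψ_n (1 ⊥ ε_0). -/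
open Matrix

section RaoSwanAux
set_option linter.unusedSectionVars false

variable {R : Type*} [CommRing R] {n : ℕ}

lemma sigmaP_val (i : Fin (2*n)) :
    (sigmaP i).val = if i.val % 2 = 0 then i.val + 1 else i.val - 1 := rfl

lemma sigmaP_sigmaP (i : Fin (2*n)) : sigmaP (sigmaP i) = i := by
  have hi := i.isLt
  apply Fin.ext
  rw [sigmaP_val, sigmaP_val]
  by_cases hp : i.val % 2 = 0
  · rw [if_pos hp, if_neg (by omega)]; omega
  · rw [if_neg hp, if_pos (by omega)]; omega

lemma ne_sigmaP (i : Fin (2*n)) : i ≠ sigmaP i := by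
  intro h
  have hv := congrArg Fin.val h
  rw [sigmaP_val] at hv
  have hi := i.isLt
  by_cases hp : i.val % 2 = 0
  · rw [if_pos hp] at hv; omega
  · rw [if_neg hp] at hv; omega

lemma psiMat_apply_ne {i j : Fin (2*n)} (h : j ≠ sigmaP i) : psiMat n R i j = 0 := by
  have h' : j.val ≠ (sigmaP i).val := fun hv => h (Fin.ext hv)
  rw [sigmaP_val] at h'
  have hi := i.isLt
  simp only [psiMat, of_apply]
  have c1 : ¬(i.val % 2 = 0 ∧ j.val = i.val + 1) := by
    rintro ⟨ha, hb⟩; rw [if_pos ha] at h'; omega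
  have c2 : ¬(i.val % 2 = 1 ∧ i.val = j.val + 1) := by
    rintro ⟨ha, hb⟩; rw [if_neg (by omega)] at h'; omega
  rw [if_neg c1, if_neg c2]

lemma psiMat_apply_sigma (i : Fin (2*n)) :
    psiMat n R i (sigmaP i) = if i.val % 2 = 0 then 1 else -1 := by
  have hi := i.isLt
  by_cases hp : i.val % 2 = 0
  · rw [if_pos hp]
    simp only [psiMat, of_apply, sigmaP_val, if_pos hp]
    rw [if_pos ⟨hp, trivial⟩]
  · rw [if_neg hp]
    simp only [psiMat, of_apply, sigmaP_val, if_neg hp]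
    rw [if_neg (by omega), if_pos ⟨by omega, by omega⟩]

lemma psiMat_sigma_apply (i : Fin (2*n)) :
    psiMat n R (sigmaP i) i = if i.val % 2 = 0 then -1 else 1 := by
  have h := psiMat_apply_sigma (R := R) (sigmaP i)
  rw [sigmaP_sigmaP] at h
  rw [h, sigmaP_val]
  have hi := i.isLt
  by_cases hp : i.val % 2 = 0
  · rw [if_pos hp, if_neg (by omega), if_pos hp]
  · rw [if_neg hp, if_pos (by omega), if_neg hp]

lemma psiMat_mul_self : psiMat n R * psiMat n R = -1 := by
  ext i k
  rw [mul_apply, Finset.sum_eq_single (sigmaP i)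
    (fun b _ hb => by rw [psiMat_apply_ne hb, zero_mul])
    (fun h => absurd (Finset.mem_univ _) h)]
  rw [psiMat_apply_sigma]
  by_cases hk : k = i
  · subst hk
    rw [psiMat_sigma_apply, Matrix.neg_apply, one_apply_eq]
    by_cases hp : k.val % 2 = 0
    · rw [if_pos hp, if_pos hp]; ring
    · rw [if_neg hp, if_neg hp]; ring
  · rw [psiMat_apply_ne (fun h => hk (by rw [h, sigmaP_sigmaP])), Matrix.neg_apply,
      one_apply_ne (Ne.symm hk), mul_zero, neg_zero]

lemma psiMat_diag (i : Fin (2*n)) : psiMat n R i i = 0 :=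
  psiMat_apply_ne (ne_sigmaP i)

lemma psiMat_transpose : (psiMat n R)ᵀ = -(psiMat n R) := by
  ext i j
  rw [transpose_apply, Matrix.neg_apply]
  by_cases hj : j = sigmaP i
  · subst hj
    rw [psiMat_sigma_apply, psiMat_apply_sigma]
    by_cases hp : i.val % 2 = 0
    · rw [if_pos hp, if_pos hp]
    · rw [if_neg hp, if_neg hp, neg_neg]
  · rw [psiMat_apply_ne hj, psiMat_apply_ne (fun h => hj (by rw [h, sigmaP_sigmaP])), neg_zero]

lemma sumEquiv_inl_val (h : 1 ≤ n) (i : Fin 1) : ((sumEquiv n h) (Sum.inl i)).val = 0 := by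
  obtain rfl : i = 0 := Fin.eq_zero i
  rfl

lemma sumEquiv_inr_val (h : 1 ≤ n) (k : Fin (2*n-1)) :
    ((sumEquiv n h) (Sum.inr k)).val = 1 + k.val := rfl

/-- the row vector `c₀ = (-1, 0, ..., 0)`. -/
def cRow (n : ℕ) (h : 1 ≤ n) (R : Type*) [CommRing R] : Matrix (Fin 1) (Fin (2*n-1)) R :=
  Matrix.single 0 ⟨0, by omega⟩ (-1)

def nuMat (n : ℕ) (h : 1 ≤ n) (R : Type*) [CommRing R] : Matrix (Fin (2*n-1)) (Fin (2*n-1)) R :=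
  (psiB n h R).toBlocks₂₂

lemma psiB_blocks (hn : 1 ≤ n) :
    psiB n hn R = fromBlocks 0 (-(cRow n hn R)) (cRow n hn R)ᵀ (nuMat n hn R) := by
  ext i j
  rcases i with i | i <;> rcases j with j | j
  · obtain rfl : i = 0 := Fin.eq_zero i
    obtain rfl : j = 0 := Fin.eq_zero j
    rw [fromBlocks_apply₁₁]
    simp only [psiB, submatrix_apply]
    rw [psiMat_diag, Matrix.zero_apply]
  · obtain rfl : i = 0 := Fin.eq_zero i
    rw [fromBlocks_apply₁₂]
    simp only [psiB, submatrix_apply]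
    have h1 := sumEquiv_inl_val (n := n) hn 0
    have h2 := sumEquiv_inr_val (n := n) hn j
    have hj := j.isLt
    simp only [psiMat, of_apply, h1, h2, Matrix.neg_apply, cRow, Matrix.single, Fin.ext_iff, Fin.val_mk,
      true_and, and_true, false_and, and_false, if_true, if_false]
    split_ifs <;> first | ring1 | (exfalso; omega) | (exfalso; tauto)
  · obtain rfl : j = 0 := Fin.eq_zero j
    rw [fromBlocks_apply₂₁]
    simp only [psiB, submatrix_apply]
    have h1 := sumEquiv_inl_val (n := n) hn 0
    have h2 := sumEquiv_inr_val (n := n) hn i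
    have hi := i.isLt
    simp only [psiMat, of_apply, h1, h2, transpose_apply, cRow, Matrix.single, Fin.ext_iff,
      Fin.val_mk, true_and, and_true, false_and, and_false, if_true, if_false]
    split_ifs <;> first | ring1 | (exfalso; omega) | (exfalso; tauto)
  · rfl

lemma psiB_mul_self (hn : 1 ≤ n) : psiB n hn R * psiB n hn R = -1 := by
  have h : psiB n hn R * psiB n hn R
      = ((-1 : Matrix (Fin (2*n)) (Fin (2*n)) R)).submatrix (sumEquiv n hn) (sumEquiv n hn) := by
    unfold psiB; rw [submatrix_mul_equiv, psiMat_mul_self]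
  rw [h]
  ext i j
  simp [submatrix_apply, one_apply, Matrix.neg_apply, EmbeddingLike.apply_eq_iff_eq]

lemma psiB_transpose (hn : 1 ≤ n) : (psiB n hn R)ᵀ = -psiB n hn R := by
  unfold psiB
  rw [transpose_submatrix, psiMat_transpose]
  ext i j
  simp [submatrix_apply, Matrix.neg_apply]

lemma psiB_rel (hn : 1 ≤ n) :
    cRow n hn R * (cRow n hn R)ᵀ = 1 ∧ cRow n hn R * nuMat n hn R = 0 ∧
    nuMat n hn R * (cRow n hn R)ᵀ = 0 ∧
    nuMat n hn R * nuMat n hn R = (cRow n hn R)ᵀ * cRow n hn R - 1 := by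
  have h := psiB_mul_self (R := R) hn
  rw [psiB_blocks hn, fromBlocks_multiply] at h
  rw [show (-1 : Matrix (Fin 1 ⊕ Fin (2*n-1)) (Fin 1 ⊕ Fin (2*n-1)) R)
      = fromBlocks (-1) 0 0 (-1) by rw [← fromBlocks_one, fromBlocks_neg]; simp only [neg_zero]]
    at h
  rw [fromBlocks_inj] at h
  obtain ⟨h11, h12, h21, h22⟩ := h
  simp only [Matrix.zero_mul, Matrix.mul_zero, Matrix.neg_mul, Matrix.mul_neg, zero_add, add_zero,
    neg_zero, neg_eq_zero] at h11 h12 h21 h22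
  refine ⟨neg_inj.mp (by rw [h11]), h12, h21, ?_⟩
  calc nuMat n hn R * nuMat n hn R
      = (-((cRow n hn R)ᵀ * cRow n hn R) + nuMat n hn R * nuMat n hn R)
        + (cRow n hn R)ᵀ * cRow n hn R := by abel
    _ = -1 + (cRow n hn R)ᵀ * cRow n hn R := by rw [h22]
    _ = (cRow n hn R)ᵀ * cRow n hn R - 1 := by abel

lemma nuMat_transpose (hn : 1 ≤ n) : (nuMat n hn R)ᵀ = -(nuMat n hn R) := by
  have h := psiB_transpose (R := R) hn
  rw [psiB_blocks hn, fromBlocks_transpose, fromBlocks_neg, fromBlocks_inj] at h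
  exact h.2.2.2

lemma nuMat_diag (hn : 1 ≤ n) (k : Fin (2*n-1)) : nuMat n hn R k k = 0 := psiMat_diag _

section abstractId
variable {m : ℕ}

lemma fin1_symm (X : Matrix (Fin 1) (Fin 1) R) : Xᵀ = X := by
  ext i j
  obtain rfl : i = 0 := Fin.eq_zero i
  obtain rfl : j = 0 := Fin.eq_zero j
  rfl

lemma row_alt (ν : Matrix (Fin m) (Fin m) R) (hsk : νᵀ = -ν) (hd : ∀ i, ν i i = 0)
    (x : Matrix (Fin 1) (Fin m) R) : x * ν * xᵀ = 0 := by
  have hsk' : ∀ i j, ν j i = -ν i j := by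
    intro i j; have h := congrFun (congrFun hsk i) j; simpa using h
  ext i j
  obtain rfl : i = 0 := Fin.eq_zero i
  obtain rfl : j = 0 := Fin.eq_zero j
  simp only [mul_apply, transpose_apply, Matrix.zero_apply]
  have h1 : ∀ k : Fin m, (∑ l, x 0 l * ν l k) * x 0 k = ∑ l, x 0 l * ν l k * x 0 k :=
    fun k => Finset.sum_mul _ _ _
  rw [Finset.sum_congr rfl fun k _ => h1 k, ← Finset.sum_product']
  refine Finset.sum_ninvolution Prod.swap ?_ ?_ (fun p => Finset.mem_univ _) Prod.swap_swap
  · intro p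
    simp only [Prod.fst_swap, Prod.snd_swap]
    rw [hsk' p.1 p.2]
    ring
  · intro p hp heq
    apply hp
    rcases p with ⟨k, l⟩
    obtain ⟨h12, -⟩ : k = l ∧ l = k := by simpa [Prod.ext_iff] using heq.symm
    subst h12
    rw [hd]
    ring

variable (c w u : Matrix (Fin 1) (Fin m) R) (ν r : Matrix (Fin m) (Fin m) R)

lemma cS (hcc : c * cᵀ = 1) : c * (1 + cᵀ * w * ν) = c + w * ν := by
  rw [Matrix.mul_add, Matrix.mul_one, ← Matrix.mul_assoc, ← Matrix.mul_assoc, hcc, Matrix.one_mul]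

lemma SnuS (hcν : c * ν = 0) (hνc : ν * cᵀ = 0) (hsk : νᵀ = -ν) :
    (1 + cᵀ * w * ν)ᵀ * ν * (1 + cᵀ * w * ν) = ν := by
  have r2 : ∀ {p : Type} (X : Matrix (Fin m) p R), c * (ν * X) = 0 := by
    intro p X; rw [← Matrix.mul_assoc, hcν, Matrix.zero_mul]
  have r3 : ∀ {p : Type} (X : Matrix (Fin 1) p R), ν * (cᵀ * X) = 0 := by
    intro p X; rw [← Matrix.mul_assoc, hνc, Matrix.zero_mul]
  have ht : (1 + cᵀ * w * ν)ᵀ = 1 + νᵀ * (wᵀ * c) := by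
    rw [transpose_add, transpose_one, transpose_mul, transpose_mul, transpose_transpose]
  rw [ht, hsk]
  simp only [Matrix.add_mul, Matrix.mul_add, Matrix.one_mul, Matrix.mul_one, Matrix.neg_mul,
    Matrix.mul_neg, Matrix.mul_assoc, r2, r3, hcν, Matrix.mul_zero, Matrix.zero_mul,
    add_zero, zero_add, neg_zero, neg_neg]

lemma cB (hcν : c * ν = 0) : c * (1 + (-ν) * wᵀ * c) = c := by
  rw [Matrix.mul_add, Matrix.mul_one, ← Matrix.mul_assoc, ← Matrix.mul_assoc, Matrix.mul_neg,
    hcν, neg_zero, Matrix.zero_mul, Matrix.zero_mul, add_zero]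

lemma BnuB (hcν : c * ν = 0) (hνν : ν * ν = cᵀ * c - 1) (hsk : νᵀ = -ν)
    (halt : w * ν * wᵀ = 0) :
    (1 + (-ν) * wᵀ * c)ᵀ * ν * (1 + (-ν) * wᵀ * c) = ν + wᵀ * c - cᵀ * w := by
  have r2 : ∀ {p : Type} (X : Matrix (Fin m) p R), c * (ν * X) = 0 := by
    intro p X; rw [← Matrix.mul_assoc, hcν, Matrix.zero_mul]
  have r4 : ∀ {p : Type} (X : Matrix (Fin m) p R), ν * (ν * X) = cᵀ * (c * X) - X := by
    intro p X
    rw [← Matrix.mul_assoc, hνν, Matrix.sub_mul, Matrix.one_mul, Matrix.mul_assoc]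
  have r5 : ∀ {p : Type} (X : Matrix (Fin 1) p R), w * (ν * (wᵀ * X)) = 0 := by
    intro p X; rw [← Matrix.mul_assoc, ← Matrix.mul_assoc, halt, Matrix.zero_mul]
  have hwc : w * cᵀ = c * wᵀ := by
    have h := fin1_symm (R := R) (w * cᵀ)
    rw [transpose_mul, transpose_transpose] at h
    exact h.symm
  have hy : c * (wᵀ * c) = w * (cᵀ * c) := by
    rw [← Matrix.mul_assoc, ← Matrix.mul_assoc, hwc]
  have ht : (1 + (-ν) * wᵀ * c)ᵀ = 1 + cᵀ * (w * ν) := by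
    rw [transpose_add, transpose_one, transpose_mul, transpose_mul, transpose_transpose,
      transpose_neg, hsk, neg_neg, ← Matrix.mul_assoc, Matrix.mul_assoc]
  rw [ht]
  simp only [Matrix.add_mul, Matrix.mul_add, Matrix.sub_mul, Matrix.mul_sub, Matrix.one_mul,
    Matrix.mul_one, Matrix.neg_mul, Matrix.mul_neg, Matrix.mul_assoc, r2, r4, r5, hνν, hy,
    Matrix.mul_zero, Matrix.zero_mul, add_zero, zero_add, neg_zero, neg_neg, sub_zero, zero_sub]
  abel

lemma Sinv (hνc : ν * cᵀ = 0) :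
    (1 + cᵀ * w * ν) * (1 + cᵀ * (-w) * ν) = 1 := by
  have r3 : ∀ {p : Type} (X : Matrix (Fin 1) p R), ν * (cᵀ * X) = 0 := by
    intro p X; rw [← Matrix.mul_assoc, hνc, Matrix.zero_mul]
  simp only [Matrix.add_mul, Matrix.mul_add, Matrix.one_mul, Matrix.mul_one, Matrix.neg_mul,
    Matrix.mul_neg, Matrix.mul_assoc, r3, Matrix.mul_zero, Matrix.zero_mul, add_zero, zero_add,
    neg_zero]
  abel

lemma Binv (hcν : c * ν = 0) :
    (1 + (-ν) * wᵀ * c) * (1 + (-ν) * (-w)ᵀ * c) = 1 := by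
  have r2 : ∀ {p : Type} (X : Matrix (Fin m) p R), c * (ν * X) = 0 := by
    intro p X; rw [← Matrix.mul_assoc, hcν, Matrix.zero_mul]
  simp only [transpose_neg, Matrix.add_mul, Matrix.mul_add, Matrix.one_mul, Matrix.mul_one,
    Matrix.neg_mul, Matrix.mul_neg, Matrix.mul_assoc, r2, Matrix.mul_zero, Matrix.zero_mul,
    add_zero, zero_add, neg_zero, neg_neg]
  abel

lemma sandwich_blocks (g : Matrix (Fin m) (Fin m) R) :
    (fromBlocks 1 0 0 g)ᵀ * fromBlocks 0 (-c) cᵀ ν * fromBlocks 1 0 0 g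
      = fromBlocks 0 (-(c * g)) (gᵀ * cᵀ) (gᵀ * (ν * g)) := by
  rw [fromBlocks_transpose, fromBlocks_multiply, fromBlocks_multiply]
  simp only [transpose_one, transpose_zero, Matrix.zero_mul, Matrix.mul_zero, Matrix.one_mul,
    Matrix.mul_one, add_zero, zero_add, Matrix.neg_mul, Matrix.mul_neg, Matrix.add_mul,
    neg_zero, Matrix.mul_assoc]

end abstractId

section keyId
variable {m : ℕ} (c u : Matrix (Fin 1) (Fin m) R) (ν r : Matrix (Fin m) (Fin m) R)

lemma key_alpha (hcc : c * cᵀ = 1) (hcν : c * ν = 0) (hνc : ν * cᵀ = 0) (hsk : νᵀ = -ν)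
    (halt : (u * rᵀ) * ν * (u * rᵀ)ᵀ = 0) :
    (1 + fromBlocks 0 0 uᵀ 0)ᵀ *
      ((fromBlocks 1 0 0 r)ᵀ * fromBlocks 0 (-c) cᵀ ν * fromBlocks 1 0 0 r) *
      (1 + fromBlocks 0 0 uᵀ 0)
    = (fromBlocks 1 0 0 ((1 + cᵀ * (-(u * rᵀ)) * ν) * r))ᵀ * fromBlocks 0 (-c) cᵀ ν *
        fromBlocks 1 0 0 ((1 + cᵀ * (-(u * rᵀ)) * ν) * r) := by
  rw [sandwich_blocks, sandwich_blocks]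
  have e1 : (1 + fromBlocks (0 : Matrix (Fin 1) (Fin 1) R) (0 : Matrix (Fin 1) (Fin m) R) uᵀ
        (0 : Matrix (Fin m) (Fin m) R))ᵀ
      = 1 + fromBlocks (0 : Matrix (Fin 1) (Fin 1) R) u (0 : Matrix (Fin m) (Fin 1) R)
        (0 : Matrix (Fin m) (Fin m) R) := by
    rw [transpose_add, transpose_one, fromBlocks_transpose, transpose_zero, transpose_zero,
      transpose_zero, transpose_transpose]
  rw [e1]
  simp only [Matrix.add_mul, Matrix.mul_add, Matrix.one_mul, Matrix.mul_one, fromBlocks_multiply,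
    fromBlocks_add, Matrix.zero_mul, Matrix.mul_zero, add_zero, zero_add, Matrix.mul_assoc]
  rw [fromBlocks_inj]
  have r1 : ∀ {p : Type} (X : Matrix (Fin 1) p R), c * (cᵀ * X) = X := by
    intro p X; rw [← Matrix.mul_assoc, hcc, Matrix.one_mul]
  have r2 : ∀ {p : Type} (X : Matrix (Fin m) p R), c * (ν * X) = 0 := by
    intro p X; rw [← Matrix.mul_assoc, hcν, Matrix.zero_mul]
  have r3 : ∀ {p : Type} (X : Matrix (Fin 1) p R), ν * (cᵀ * X) = 0 := by
    intro p X; rw [← Matrix.mul_assoc, hνc, Matrix.zero_mul]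
  refine ⟨?_, ?_, ?_, ?_⟩
  · have h0 := halt
    rw [transpose_mul, transpose_transpose] at h0
    have t3 : u * (rᵀ * (ν * (r * uᵀ))) = 0 := by
      rw [← Matrix.mul_assoc, ← Matrix.mul_assoc, h0]
    have t1 : u * (rᵀ * cᵀ) = c * r * uᵀ := by
      have h := fin1_symm (R := R) (c * r * uᵀ)
      rw [transpose_mul, transpose_mul, transpose_transpose] at h
      exact h
    rw [t1, t3, Matrix.neg_mul]
    abel
  · rw [r1, Matrix.neg_mul, ← Matrix.mul_assoc]
    abel
  · simp only [transpose_add, transpose_mul, transpose_neg, transpose_transpose, hsk,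
      Matrix.add_mul, Matrix.neg_mul, Matrix.mul_neg, neg_neg, Matrix.mul_assoc, hcc,
      Matrix.mul_one]
  · simp only [transpose_add, transpose_mul, transpose_neg, transpose_transpose, hsk,
      Matrix.add_mul, Matrix.neg_mul, Matrix.mul_neg, neg_neg, Matrix.mul_assoc, r2, r3,
      Matrix.mul_zero, Matrix.zero_mul, add_zero, zero_add, neg_zero]
end keyId

section keyBeta
variable {m : ℕ} (c u : Matrix (Fin 1) (Fin m) R) (ν r rinv : Matrix (Fin m) (Fin m) R)

lemma key_beta (hcc : c * cᵀ = 1) (hcν : c * ν = 0) (hνc : ν * cᵀ = 0)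
    (hνν : ν * ν = cᵀ * c - 1) (hsk : νᵀ = -ν) (hri : rinv * r = 1)
    (haltw : (u * rinv) * ν * (u * rinv)ᵀ = 0) :
    (1 + fromBlocks (0 : Matrix (Fin 1) (Fin 1) R) u 0 0)ᵀ *
      ((fromBlocks 1 0 0 r)ᵀ * fromBlocks 0 (-c) cᵀ ν * fromBlocks 1 0 0 r) *
      (1 + fromBlocks (0 : Matrix (Fin 1) (Fin 1) R) u 0 0)
    = (fromBlocks 1 0 0 ((1 + (-ν) * (-(u * rinv))ᵀ * c) * r))ᵀ * fromBlocks 0 (-c) cᵀ ν *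
        fromBlocks 1 0 0 ((1 + (-ν) * (-(u * rinv))ᵀ * c) * r) := by
  rw [sandwich_blocks, sandwich_blocks]
  have e1 : (1 + fromBlocks (0 : Matrix (Fin 1) (Fin 1) R) u (0 : Matrix (Fin m) (Fin 1) R)
        (0 : Matrix (Fin m) (Fin m) R))ᵀ
      = 1 + fromBlocks (0 : Matrix (Fin 1) (Fin 1) R) (0 : Matrix (Fin 1) (Fin m) R) uᵀ
        (0 : Matrix (Fin m) (Fin m) R) := by
    rw [transpose_add, transpose_one, fromBlocks_transpose, transpose_zero, transpose_zero,
      transpose_zero]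
  rw [e1]
  simp only [Matrix.add_mul, Matrix.mul_add, Matrix.one_mul, Matrix.mul_one, fromBlocks_multiply,
    fromBlocks_add, Matrix.zero_mul, Matrix.mul_zero, add_zero, zero_add, Matrix.mul_assoc]
  rw [fromBlocks_inj]
  have r1 : ∀ {p : Type} (X : Matrix (Fin 1) p R), c * (cᵀ * X) = X := by
    intro p X; rw [← Matrix.mul_assoc, hcc, Matrix.one_mul]
  have r2 : ∀ {p : Type} (X : Matrix (Fin m) p R), c * (ν * X) = 0 := by
    intro p X; rw [← Matrix.mul_assoc, hcν, Matrix.zero_mul]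
  have r3 : ∀ {p : Type} (X : Matrix (Fin 1) p R), ν * (cᵀ * X) = 0 := by
    intro p X; rw [← Matrix.mul_assoc, hνc, Matrix.zero_mul]
  have r4 : ∀ {p : Type} (X : Matrix (Fin m) p R), ν * (ν * X) = cᵀ * (c * X) - X := by
    intro p X
    rw [← Matrix.mul_assoc, hνν, Matrix.sub_mul, Matrix.one_mul, Matrix.mul_assoc]
  have r6 : ∀ {p : Type} (X : Matrix (Fin m) p R), rinv * (r * X) = X := by
    intro p X; rw [← Matrix.mul_assoc, hri, Matrix.one_mul]
  have r7 : ∀ {p : Type} (X : Matrix (Fin m) p R), rᵀ * (rinvᵀ * X) = X := by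
    have h : rᵀ * rinvᵀ = 1 := by rw [← transpose_mul, hri, transpose_one]
    intro p X; rw [← Matrix.mul_assoc, h, Matrix.one_mul]
  have h0 := haltw
  rw [transpose_mul] at h0
  have r8 : ∀ {p : Type} (X : Matrix (Fin 1) p R),
      u * (rinv * (ν * (rinvᵀ * (uᵀ * X)))) = 0 := by
    intro p X
    calc u * (rinv * (ν * (rinvᵀ * (uᵀ * X)))) = (u * rinv * ν * (rinvᵀ * uᵀ)) * X := by
          simp only [Matrix.mul_assoc]
      _ = 0 := by rw [h0, Matrix.zero_mul]
  have r9 : c * (rinvᵀ * (uᵀ * (c * r))) = u * (rinv * (cᵀ * (c * r))) := by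
    have h : c * (rinvᵀ * uᵀ) = u * rinv * cᵀ := by
      have h2 := fin1_symm (R := R) (u * rinv * cᵀ)
      rw [transpose_mul, transpose_mul, transpose_transpose] at h2
      exact h2
    calc c * (rinvᵀ * (uᵀ * (c * r))) = (c * (rinvᵀ * uᵀ)) * (c * r) := by
          simp only [Matrix.mul_assoc]
      _ = (u * rinv * cᵀ) * (c * r) := by rw [h]
      _ = u * (rinv * (cᵀ * (c * r))) := by simp only [Matrix.mul_assoc]
  refine ⟨rfl, ?_, ?_, ?_⟩
  · simp only [Matrix.neg_mul, Matrix.mul_neg, r2, neg_zero, add_zero]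
  · simp only [transpose_add, transpose_mul, transpose_neg, transpose_transpose, hsk, neg_neg,
      Matrix.add_mul, Matrix.neg_mul, Matrix.mul_neg, Matrix.mul_assoc, hνc, Matrix.mul_zero,
      Matrix.zero_mul, add_zero, neg_zero]
  · simp only [transpose_add, transpose_mul, transpose_neg, transpose_transpose, hsk, neg_neg,
      Matrix.add_mul, Matrix.mul_add, Matrix.sub_mul, Matrix.mul_sub, Matrix.neg_mul,
      Matrix.mul_neg, Matrix.mul_assoc, r1, r2, r3, r4, r6, r7, r8, r9, hri, hνc, hcν, hcc,
      Matrix.mul_zero, Matrix.zero_mul, Matrix.mul_one, Matrix.one_mul, add_zero, zero_add,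
      neg_zero, sub_zero, zero_sub, neg_neg]
    abel
end keyBeta

section helpers

lemma sbm_transpose {A B : Type} [DecidableEq A] [DecidableEq B] (i : A) (j : B) (a : R) :
    (Matrix.single i j a)ᵀ = Matrix.single j i a := by
  ext p q
  simp only [transpose_apply, Matrix.single, of_apply]
  exact if_congr and_comm rfl rfl

lemma sbm_neg {A B : Type} [DecidableEq A] [DecidableEq B] (i : A) (j : B) (a : R) :
    Matrix.single i j (-a) = -(Matrix.single i j a) := by
  ext p q
  simp only [Matrix.single, of_apply, Matrix.neg_apply]
  split_ifs <;> simp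

lemma sbm_inr_inl {m : ℕ} (i : Fin m) (z : Fin 1) (a : R) :
    Matrix.single (Sum.inr i : Fin 1 ⊕ Fin m) (Sum.inl z) a
      = fromBlocks (0 : Matrix (Fin 1) (Fin 1) R) (0 : Matrix (Fin 1) (Fin m) R)
        (Matrix.single i z a) (0 : Matrix (Fin m) (Fin m) R) := by
  ext p q
  rcases p with p | p <;> rcases q with q | q <;>
    simp [Matrix.single, fromBlocks_apply₁₁, fromBlocks_apply₁₂, fromBlocks_apply₂₁,
      fromBlocks_apply₂₂]

lemma sbm_inl_inr {m : ℕ} (z : Fin 1) (j : Fin m) (a : R) :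
    Matrix.single (Sum.inl z : Fin 1 ⊕ Fin m) (Sum.inr j) a
      = fromBlocks (0 : Matrix (Fin 1) (Fin 1) R) (Matrix.single z j a)
        (0 : Matrix (Fin m) (Fin 1) R) (0 : Matrix (Fin m) (Fin m) R) := by
  ext p q
  rcases p with p | p <;> rcases q with q | q <;>
    simp [Matrix.single, fromBlocks_apply₁₁, fromBlocks_apply₁₂, fromBlocks_apply₂₁,
      fromBlocks_apply₂₂]

lemma elem_submatrix {N : Type} [DecidableEq N] [Fintype N] {k : ℕ} (f : N ≃ Fin k)
    (i j : Fin k) (a : R) :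
    (1 + Matrix.single i j a).submatrix f f = 1 + Matrix.single (f.symm i) (f.symm j) a := by
  ext p q
  simp only [submatrix_apply, Matrix.add_apply, Matrix.one_apply, Matrix.single, of_apply,
    EmbeddingLike.apply_eq_iff_eq, Equiv.symm_apply_eq]

lemma elem_mul_elem_neg {k : ℕ} (i j : Fin k) (a : R) (hij : i ≠ j) :
    (1 + Matrix.single i j a) * (1 + Matrix.single i j (-a)) = 1 := by
  have h1 : Matrix.single i j a * Matrix.single i j (-a) = 0 :=
    (Matrix.single_mul_single_of_ne _ _ _ _ hij.symm _)
  have h2 : Matrix.single i j a + Matrix.single i j (-a) = 0 := by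
    rw [← Matrix.single_add, add_neg_cancel, Matrix.single_zero]
  calc (1 + Matrix.single i j a) * (1 + Matrix.single i j (-a))
      = 1 + (Matrix.single i j a + Matrix.single i j (-a))
        + Matrix.single i j a * Matrix.single i j (-a) := by noncomm_ring
    _ = 1 := by rw [h1, h2, add_zero, add_zero]

lemma conjT_mul {ι : Type} [Fintype ι] (A B C : Matrix ι ι R) :
    (A * B)ᵀ * C * (A * B) = Bᵀ * (Aᵀ * C * A) * B := by
  rw [transpose_mul]
  noncomm_ring

lemma elem_decomp {k : ℕ} (i j z : Fin k) (hij : i ≠ j) (hi : i ≠ z) (hj : j ≠ z) (a : R) :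
    (1 + Matrix.single i j a : Matrix (Fin k) (Fin k) R)
      = (1 + Matrix.single i z a) * (1 + Matrix.single z j 1) *
        (1 + Matrix.single i z (-a)) * (1 + Matrix.single z j (-1)) := by
  set A := Matrix.single i z a with hA
  set B := Matrix.single z j (1 : R) with hB
  have hAB : A * B = Matrix.single i j a := by
    rw [hA, hB, Matrix.single_mul_single_same, mul_one]
  have hAA : A * A = (0 : Matrix (Fin k) (Fin k) R) :=
    (Matrix.single_mul_single_of_ne _ _ _ _ (Ne.symm hi) _)
  have hBB : B * B = (0 : Matrix (Fin k) (Fin k) R) :=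
    (Matrix.single_mul_single_of_ne _ _ _ _ hj _)
  have hBA : B * A = (0 : Matrix (Fin k) (Fin k) R) :=
    (Matrix.single_mul_single_of_ne _ _ _ _ (Ne.symm hij) _)
  have hABA : A * B * A = (0 : Matrix (Fin k) (Fin k) R) := by
    rw [hAB, hA, (Matrix.single_mul_single_of_ne (h := (Ne.symm hij)))]
  have hABB : A * B * B = (0 : Matrix (Fin k) (Fin k) R) := by
    rw [hAB, hB, (Matrix.single_mul_single_of_ne (h := hj))]
  have s1 : (1 + A) * (1 + B) = 1 + A + B + A * B := by noncomm_ring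
  have s2 : (1 + A + B + A * B) * (1 + Matrix.single i z (-a)) = 1 + B + A * B := by
    rw [sbm_neg]
    have e : (1 + A + B + A * B) * (1 + -A)
        = 1 + B + A * B - A * A - B * A - A * B * A := by noncomm_ring
    rw [e, hAA, hBA, hABA, sub_zero, sub_zero, sub_zero]
  have s3 : (1 + B + A * B) * (1 + Matrix.single z j (-1 : R)) = 1 + A * B := by
    rw [show Matrix.single z j (-1 : R) = -B by rw [hB, ← sbm_neg]]
    have e : (1 + B + A * B) * (1 + -B) = 1 + A * B - B * B - A * B * B := by noncomm_ring
    rw [e, hBB, hABB, sub_zero, sub_zero]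
  rw [← hAB, s1, s2, s3]

end helpers

section mainArg
variable {n : ℕ}

lemma psiB_inv (hn1 : 1 ≤ n) : (psiB n hn1 R)⁻¹ = -psiB n hn1 R :=
  inv_eq_right_inv (by rw [Matrix.mul_neg, psiB_mul_self, neg_neg])

lemma alphaM_psiB (hn1 : 1 ≤ n) (w : Matrix (Fin 1) (Fin (2*n-1)) R) :
    alphaM (psiB n hn1 R) w = 1 + (cRow n hn1 R)ᵀ * w * nuMat n hn1 R := by
  unfold alphaM
  rw [psiB_inv hn1, psiB_blocks hn1, fromBlocks_neg, toBlocks_fromBlocks₁₂,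
    toBlocks_fromBlocks₂₂, neg_neg]

lemma betaM_psiB (hn1 : 1 ≤ n) (w : Matrix (Fin 1) (Fin (2*n-1)) R) :
    betaM (psiB n hn1 R) w = 1 + (-(nuMat n hn1 R)) * wᵀ * cRow n hn1 R := by
  unfold betaM
  rw [psiB_inv hn1, psiB_blocks hn1, fromBlocks_neg, toBlocks_fromBlocks₂₂,
    toBlocks_fromBlocks₁₂, neg_neg]

def QProp (hn1 : 1 ≤ n) (M : Matrix (Fin (2*n)) (Fin (2*n)) R) : Prop :=
  ∃ ρ : (Matrix (Fin (2*n-1)) (Fin (2*n-1)) R)ˣ, ρ ∈ EphiGroup (psiB n hn1 R) ∧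
    (M.submatrix (sumEquiv n hn1) (sumEquiv n hn1))ᵀ * psiB n hn1 R *
        M.submatrix (sumEquiv n hn1) (sumEquiv n hn1)
      = (fromBlocks 1 0 0 ((ρ : Matrix (Fin (2*n-1)) (Fin (2*n-1)) R)))ᵀ * psiB n hn1 R *
          fromBlocks 1 0 0 ((ρ : Matrix (Fin (2*n-1)) (Fin (2*n-1)) R))

lemma QProp_one (hn1 : 1 ≤ n) : QProp (R := R) hn1 1 := by
  refine ⟨1, one_mem _, ?_⟩
  rw [submatrix_one_equiv, Units.val_one, fromBlocks_one]

lemma step_atomic (hn1 : 1 ≤ n) (M : Matrix (Fin (2*n)) (Fin (2*n)) R)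
    (hQ : QProp hn1 M) (i j : Fin (2*n)) (a : R) (hij : i ≠ j)
    (h0 : i.val = 0 ∨ j.val = 0) :
    QProp hn1 (M * (1 + Matrix.single i j a)) := by
  obtain ⟨ρ, hρ, hEq⟩ := hQ
  obtain ⟨hcc, hcν, hνc, hνν⟩ := psiB_rel (R := R) hn1
  have hsk := nuMat_transpose (R := R) hn1
  have hd := nuMat_diag (R := R) hn1
  have hsub : (M * (1 + Matrix.single i j a)).submatrix (sumEquiv n hn1) (sumEquiv n hn1)
      = M.submatrix (sumEquiv n hn1) (sumEquiv n hn1) *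
        (1 + Matrix.single ((sumEquiv n hn1).symm i) ((sumEquiv n hn1).symm j) a) := by
    rw [← elem_submatrix, submatrix_mul_equiv]
  rcases h0 with h0 | h0
  · -- i.val = 0 : beta case
    have hjv : j.val ≠ 0 := fun h => hij (Fin.ext (h0.trans h.symm))
    set jm : Fin (2*n-1) := ⟨j.val - 1, by have := j.isLt; omega⟩ with hjm
    have hsi : (sumEquiv n hn1).symm i = Sum.inl 0 := by
      rw [Equiv.symm_apply_eq]
      exact Fin.ext (by rw [sumEquiv_inl_val hn1 0]; exact h0)
    have hsj : (sumEquiv n hn1).symm j = Sum.inr jm := by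
      rw [Equiv.symm_apply_eq]
      refine Fin.ext ?_
      rw [sumEquiv_inr_val hn1]
      show j.val = 1 + (j.val - 1)
      omega
    set u := Matrix.single (0 : Fin 1) jm a with hu
    set ri := ((ρ⁻¹ : (Matrix (Fin (2*n-1)) (Fin (2*n-1)) R)ˣ) :
      Matrix (Fin (2*n-1)) (Fin (2*n-1)) R) with hri2
    have hri : ri * (ρ : Matrix (Fin (2*n-1)) (Fin (2*n-1)) R) = 1 := by
      rw [hri2, ← Units.val_mul, inv_mul_cancel, Units.val_one]
    have haltw := row_alt (R := R) (nuMat n hn1 R) hsk hd (u * ri)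
    have hσ1 : (1 + (-(nuMat n hn1 R)) * (-(u * ri))ᵀ * cRow n hn1 R) *
        (1 + (-(nuMat n hn1 R)) * (u * ri)ᵀ * cRow n hn1 R) = 1 := by
      have h := Binv (cRow n hn1 R) (-(u * ri)) (nuMat n hn1 R) hcν
      rwa [neg_neg] at h
    have hσ2 : (1 + (-(nuMat n hn1 R)) * (u * ri)ᵀ * cRow n hn1 R) *
        (1 + (-(nuMat n hn1 R)) * (-(u * ri))ᵀ * cRow n hn1 R) = 1 :=
      Binv (cRow n hn1 R) (u * ri) (nuMat n hn1 R) hcν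
    refine ⟨(⟨1 + (-(nuMat n hn1 R)) * (-(u * ri))ᵀ * cRow n hn1 R,
             1 + (-(nuMat n hn1 R)) * (u * ri)ᵀ * cRow n hn1 R, hσ1, hσ2⟩ :
             (Matrix (Fin (2*n-1)) (Fin (2*n-1)) R)ˣ) * ρ,
      mul_mem (Subgroup.subset_closure ⟨-(u * ri), Or.inr (betaM_psiB hn1 _).symm⟩) hρ, ?_⟩
    rw [hsub, hsi, hsj, sbm_inl_inr, ← hu, conjT_mul, hEq, Units.val_mul]
    rw [psiB_blocks hn1]
    exact key_beta (cRow n hn1 R) u (nuMat n hn1 R)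
      (ρ : Matrix (Fin (2*n-1)) (Fin (2*n-1)) R) ri hcc hcν hνc hνν hsk hri haltw
  · -- j.val = 0 : alpha case
    have hiv : i.val ≠ 0 := fun h => hij (Fin.ext (h.trans h0.symm))
    set im : Fin (2*n-1) := ⟨i.val - 1, by have := i.isLt; omega⟩ with him
    have hsj : (sumEquiv n hn1).symm j = Sum.inl 0 := by
      rw [Equiv.symm_apply_eq]
      exact Fin.ext (by rw [sumEquiv_inl_val hn1 0]; exact h0)
    have hsi : (sumEquiv n hn1).symm i = Sum.inr im := by
      rw [Equiv.symm_apply_eq]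
      refine Fin.ext ?_
      rw [sumEquiv_inr_val hn1]
      show i.val = 1 + (i.val - 1)
      omega
    set u := Matrix.single (0 : Fin 1) im a with hu
    set rr := ((ρ : (Matrix (Fin (2*n-1)) (Fin (2*n-1)) R)ˣ) :
      Matrix (Fin (2*n-1)) (Fin (2*n-1)) R) with hrr
    have haltw := row_alt (R := R) (nuMat n hn1 R) hsk hd (u * rrᵀ)
    have hσ1 : (1 + (cRow n hn1 R)ᵀ * (-(u * rrᵀ)) * nuMat n hn1 R) *
        (1 + (cRow n hn1 R)ᵀ * (u * rrᵀ) * nuMat n hn1 R) = 1 := by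
      have h := Sinv (cRow n hn1 R) (-(u * rrᵀ)) (nuMat n hn1 R) hνc
      rwa [neg_neg] at h
    have hσ2 : (1 + (cRow n hn1 R)ᵀ * (u * rrᵀ) * nuMat n hn1 R) *
        (1 + (cRow n hn1 R)ᵀ * (-(u * rrᵀ)) * nuMat n hn1 R) = 1 :=
      Sinv (cRow n hn1 R) (u * rrᵀ) (nuMat n hn1 R) hνc
    refine ⟨(⟨1 + (cRow n hn1 R)ᵀ * (-(u * rrᵀ)) * nuMat n hn1 R,
             1 + (cRow n hn1 R)ᵀ * (u * rrᵀ) * nuMat n hn1 R, hσ1, hσ2⟩ :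
             (Matrix (Fin (2*n-1)) (Fin (2*n-1)) R)ˣ) * ρ,
      mul_mem (Subgroup.subset_closure ⟨-(u * rrᵀ), Or.inl (alphaM_psiB hn1 _).symm⟩) hρ, ?_⟩
    rw [hsub, hsi, hsj, sbm_inr_inl,
      show Matrix.single im (0 : Fin 1) a = uᵀ from by rw [hu, sbm_transpose],
      conjT_mul, hEq, Units.val_mul]
    rw [psiB_blocks hn1]
    exact key_alpha (cRow n hn1 R) u (nuMat n hn1 R) rr hcc hcν hνc hsk haltw

lemma step_general (hn1 : 1 ≤ n) (M : Matrix (Fin (2*n)) (Fin (2*n)) R)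
    (hQ : QProp hn1 M) (i j : Fin (2*n)) (a : R) (hij : i ≠ j) :
    QProp hn1 (M * (1 + Matrix.single i j a)) := by
  by_cases hi0 : i.val = 0
  · exact step_atomic hn1 M hQ i j a hij (Or.inl hi0)
  by_cases hj0 : j.val = 0
  · exact step_atomic hn1 M hQ i j a hij (Or.inr hj0)
  set z0 : Fin (2*n) := ⟨0, by omega⟩ with hz0
  have hiz : i ≠ z0 := fun h => hi0 (by rw [h])
  have hjz : j ≠ z0 := fun h => hj0 (by rw [h])
  rw [elem_decomp i j z0 hij hiz hjz a, ← Matrix.mul_assoc, ← Matrix.mul_assoc,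
    ← Matrix.mul_assoc]
  exact step_atomic hn1 _
    (step_atomic hn1 _
      (step_atomic hn1 _
        (step_atomic hn1 _ hQ i z0 a hiz (Or.inr rfl))
        z0 j 1 (Ne.symm hjz) (Or.inl rfl))
      i z0 (-a) hiz (Or.inr rfl))
    z0 j (-1) (Ne.symm hjz) (Or.inl rfl)

lemma Q_of_mem (hn1 : 1 ≤ n) (u : (Matrix (Fin (2*n)) (Fin (2*n)) R)ˣ)
    (hu : u ∈ ElemGroup (2*n) R) :
    QProp hn1 (u : Matrix (Fin (2*n)) (Fin (2*n)) R) := by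
  have hu' : u ∈ Subgroup.closure {v : (Matrix (Fin (2*n)) (Fin (2*n)) R)ˣ |
      ∃ (i j : Fin (2*n)) (a : R), i ≠ j ∧ (v : Matrix (Fin (2*n)) (Fin (2*n)) R)
        = 1 + Matrix.single i j a} := hu
  clear hu
  induction hu' using Subgroup.closure_induction_right with
  | one => rw [Units.val_one]; exact QProp_one hn1
  | mul_right x hx y hy ih =>
    obtain ⟨i, j, a, hij, hy⟩ := hy
    rw [Units.val_mul, hy]
    exact step_general hn1 _ ih i j a hij
  | mul_inv_cancel x hx y hy ih =>
    obtain ⟨i, j, a, hij, hy⟩ := hy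
    have hyinv : ((y⁻¹ : (Matrix (Fin (2*n)) (Fin (2*n)) R)ˣ) :
        Matrix (Fin (2*n)) (Fin (2*n)) R) = 1 + Matrix.single i j (-a) :=
      Units.inv_eq_of_mul_eq_one_right (by rw [hy]; exact elem_mul_elem_neg i j a hij)
    rw [Units.val_mul, hyinv]
    exact step_general hn1 _ ih i j (-a) hij

end mainArg

end RaoSwanAux

/-- Rao–Swan: for `ε ∈ E_{2n}(R)` there is `ε₀ ∈ E_{ψ_n}(R)` with
`εᵀ ψ_n ε = (1 ⊥ ε₀)ᵀ ψ_n (1 ⊥ ε₀)`. -/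
theorem stmt14 {R : Type*} [CommRing R] (n : ℕ) (hn : 2 ≤ n)
    (ε : (Matrix (Fin (2*n)) (Fin (2*n)) R)ˣ) (hε : ε ∈ ElemGroup (2*n) R) :
    ∃ ε₀ ∈ EphiGroup (psiB n (le_trans one_le_two hn) R),
      (ε : Matrix (Fin (2*n)) (Fin (2*n)) R)ᵀ * psiMat n R *
          (ε : Matrix (Fin (2*n)) (Fin (2*n)) R) =
        (onePerpBig (le_trans one_le_two hn)
            (ε₀ : Matrix (Fin (2*n-1)) (Fin (2*n-1)) R))ᵀ * psiMat n R *
          onePerpBig (le_trans one_le_two hn)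
            (ε₀ : Matrix (Fin (2*n-1)) (Fin (2*n-1)) R) := by
  have hn1 : 1 ≤ n := le_trans one_le_two hn
  obtain ⟨ρ, hρ, hEq⟩ := Q_of_mem hn1 ε hε
  refine ⟨ρ, hρ, ?_⟩
  have hpsi : psiMat n R = (psiB n hn1 R).submatrix (sumEquiv n hn1).symm (sumEquiv n hn1).symm := by
    unfold psiB
    rw [submatrix_submatrix, Equiv.self_comp_symm, submatrix_id_id]
  have hdec : ∀ A : Matrix (Fin 1 ⊕ Fin (2*n-1)) (Fin 1 ⊕ Fin (2*n-1)) R,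
      (Aᵀ * psiB n hn1 R * A).submatrix (sumEquiv n hn1).symm (sumEquiv n hn1).symm
        = (A.submatrix (sumEquiv n hn1).symm (sumEquiv n hn1).symm)ᵀ * psiMat n R *
          A.submatrix (sumEquiv n hn1).symm (sumEquiv n hn1).symm := by
    intro A
    rw [hpsi, transpose_submatrix, submatrix_mul_equiv, submatrix_mul_equiv]
  have h1 : ((ε : Matrix (Fin (2*n)) (Fin (2*n)) R).submatrix (sumEquiv n hn1)
        (sumEquiv n hn1)).submatrix (sumEquiv n hn1).symm (sumEquiv n hn1).symm
      = (ε : Matrix (Fin (2*n)) (Fin (2*n)) R) := by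
    rw [submatrix_submatrix, Equiv.self_comp_symm, submatrix_id_id]
  show (ε : Matrix (Fin (2*n)) (Fin (2*n)) R)ᵀ * psiMat n R *
      (ε : Matrix (Fin (2*n)) (Fin (2*n)) R)
    = (onePerpBig hn1 (ρ : Matrix (Fin (2*n-1)) (Fin (2*n-1)) R))ᵀ * psiMat n R *
      onePerpBig hn1 (ρ : Matrix (Fin (2*n-1)) (Fin (2*n-1)) R)
  conv_lhs => rw [← h1]
  rw [← hdec, hEq, hdec]
  rfl
end
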